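/- arXiv:1402.2034 — 6 statements merged into one kernel-verified Lean document; each statement's English description precedes it below -/
import Mathlib

section
/- A permutation π is sorted by the stack sorting operator S (i.e., S(π) is the identity permutation, the increasing list of its values) if and only if π avoids the pattern 231. -/
/-- Stack sorting with fuel (fuel = length always suffices). -/
def stackSortAux : ℕ → List ℕ → List ℕ
  | 0, _ => []
  | _ + 1, [] => []
  | fuel + 1, x :: xs =>
    let l := x :: xs
    let m := l.foldr max 0
    stackSortAux fuel (l.takeWhile (· ≠ m)) ++
      stackSortAux fuel ((l.dropWhile (· ≠ m)).tail) ++ [m]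

/-- The stack sorting operator `S`: `S(ε) = ε` and `S(α n β) = S(α) S(β) n`
where `n` is the maximum element. -/
def stackSort (l : List ℕ) : List ℕ := stackSortAux l.length l

/-- `σ` avoids the pattern 231. -/
def Avoids231 (σ : List ℕ) : Prop :=
  ¬ ∃ i j k, i < j ∧ j < k ∧ k < σ.length ∧
      σ.getD k 0 < σ.getD i 0 ∧ σ.getD i 0 < σ.getD j 0

/-- `σ` avoids the pattern 132. -/
def Avoids132 (σ : List ℕ) : Prop :=
  ¬ ∃ i j k, i < j ∧ j < k ∧ k < σ.length ∧
      σ.getD i 0 < σ.getD k 0 ∧ σ.getD k 0 < σ.getD j 0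

/-- Binary trees with natural number labels. -/
inductive BTree where
  | leaf : BTree
  | node : BTree → ℕ → BTree → BTree

def BTree.inorder : BTree → List ℕ
  | .leaf => []
  | .node l n r => l.inorder ++ [n] ++ r.inorder

def BTree.postorder : BTree → List ℕ
  | .leaf => []
  | .node l n r => l.postorder ++ r.postorder ++ [n]

/-- A tree is decreasing when labels strictly decrease from root to leaves. -/
def BTree.Decreasing : BTree → Prop
  | .leaf => True
  | .node l n r =>
      l.Decreasing ∧ r.Decreasing ∧
      (∀ x ∈ l.inorder, x < n) ∧ (∀ x ∈ r.inorder, x < n)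

/-- The underlying unlabeled shape of a tree (labels replaced by `0`). -/
def BTree.shape : BTree → BTree
  | .leaf => .leaf
  | .node l _ r => .node l.shape 0 r.shape

def BTree.map (f : ℕ → ℕ) : BTree → BTree
  | .leaf => .leaf
  | .node l n r => .node (l.map f) (f n) (r.map f)

/-- Labels on the rightmost branch from the root. -/
def BTree.rightBranch : BTree → List ℕ
  | .leaf => []
  | .node _ n r => n :: r.rightBranch

/-- Labels on the leftmost branch from the root. -/
def BTree.leftBranch : BTree → List ℕ
  | .leaf => []
  | .node l n _ => n :: l.leftBranch

def TinAux : ℕ → List ℕ → BTree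
  | 0, _ => .leaf
  | _ + 1, [] => .leaf
  | fuel + 1, x :: xs =>
    let l := x :: xs
    let m := l.foldr max 0
    .node (TinAux fuel (l.takeWhile (· ≠ m))) m
          (TinAux fuel ((l.dropWhile (· ≠ m)).tail))

/-- The decreasing binary tree whose in-order reading is `l`. -/
def Tin (l : List ℕ) : BTree := TinAux l.length l

def PpermAux : ℕ → List ℕ → List ℕ
  | 0, _ => []
  | _ + 1, [] => []
  | fuel + 1, x :: xs =>
    let l := x :: xs
    let m := l.foldr max 0
    let α := l.takeWhile (· ≠ m)
    let β := (l.dropWhile (· ≠ m)).tail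
    (PpermAux fuel α).map (· + β.length) ++ [m] ++
      PpermAux fuel (β.map (· - α.length))

/-- The bijection `P` from 231-avoiding to 132-avoiding permutations,
`P(ε) = ε` and `P(α ⊕ (1 ⊖ β)) = (P(α) ⊕ 1) ⊖ P(β)`. -/
def Pperm (l : List ℕ) : List ℕ := PpermAux l.length l

/-- Direct sum of permutations: `α ⊕ β`. -/
def osum (α β : List ℕ) : List ℕ := α ++ β.map (· + α.length)

/-- Skew sum of permutations: `α ⊖ β`. -/
def ossum (α β : List ℕ) : List ℕ := α.map (· + β.length) ++ β

def lrP : ℕ → List ℕ × List ℕ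
  | 0 => ([], [])
  | m + 1 => (ossum [1] (lrP m).2, osum (lrP m).1 [1])

/-- `λ_n`: `λ_{m+1} = 1 ⊖ ρ_m`. -/
def lamP (n : ℕ) : List ℕ := (lrP n).1

/-- `ρ_n`: `ρ_{m+1} = λ_m ⊕ 1`. -/
def rhoP (n : ℕ) : List ℕ := (lrP n).2

/-- `s` and `p` are order isomorphic lists. -/
def OrderIsoList (s p : List ℕ) : Prop :=
  s.length = p.length ∧
  ∀ i j, i < s.length → j < s.length →
    (s.getD i 0 < s.getD j 0 ↔ p.getD i 0 < p.getD j 0)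

/-- `σ` contains the pattern `π`. -/
def Contains (σ π : List ℕ) : Prop :=
  ∃ s : List ℕ, s.Sublist σ ∧ OrderIsoList s π

/-- The up-down word of a permutation (`true` = ascent `u`, `false` = descent `d`). -/
def updown (l : List ℕ) : List Bool :=
  (l.zip l.tail).map (fun p => decide (p.1 < p.2))

/-- No value larger than `max x y` occurs (strictly) between `x` and `y` in `l`. -/
def NoLargerBetween (l : List ℕ) (x y : ℕ) : Prop :=
  ∀ i j k, i < j → j < k → k < l.length →
    ((l.getD i 0 = x ∧ l.getD k 0 = y) ∨ (l.getD i 0 = y ∧ l.getD k 0 = x)) →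
    l.getD j 0 ≤ max x y

/-- The basic operators: stack sorting `S` and reversal `R`. -/
inductive SOp where
  | s : SOp
  | r : SOp

def applyOp : SOp → List ℕ → List ℕ
  | .s => stackSort
  | .r => List.reverse

/-- A composition of operators from `{S, R}`. -/
def applyOps (ops : List SOp) : List ℕ → List ℕ :=
  ops.foldr (fun op f => applyOp op ∘ f) id

/-- `i` is the position of a left-to-right maximum of `l`. -/
def LRmaxPos (l : List ℕ) (i : ℕ) : Prop :=
  i < l.length ∧ ∀ j, j < i → l.getD j 0 < l.getD i 0

/-- `i` is the position of a right-to-left maximum of `l`. -/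
def RLmaxPos (l : List ℕ) (i : ℕ) : Prop :=
  i < l.length ∧ ∀ j, i < j → j < l.length → l.getD j 0 < l.getD i 0

/-- The reverse Zeilberger statistic: the largest `k` such that
`(n-k+1) … (n-1) n` is a subword of `l`, where `n = l.length`. -/
noncomputable def Rzeil (l : List ℕ) : ℕ :=
  sSup {k | (List.range' (l.length - k + 1) k).Sublist l}
namespace SSort

lemma le_foldr_max {l : List ℕ} {x : ℕ} (hx : x ∈ l) : x ≤ l.foldr max 0 := by
  induction l with
  | nil => simp at hx
  | cons a t ih =>
    rcases List.mem_cons.1 hx with h | h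
    · simp [h, le_max_iff]
    · simp only [List.foldr_cons, le_max_iff]; exact Or.inr (ih h)

lemma foldr_max_mem : ∀ {l : List ℕ}, l ≠ [] → l.foldr max 0 ∈ l := by
  intro l
  induction l with
  | nil => simp
  | cons a t ih =>
    intro _
    by_cases ht : t = []
    · simp [ht]
    · rcases max_cases a (t.foldr max 0) with ⟨h, _⟩ | ⟨h, _⟩
      · simp [h]
      · simp only [List.foldr_cons, h]
        exact List.mem_cons_of_mem _ (ih ht)

lemma decomp {l : List ℕ} (h : l ≠ []) :
    l = l.takeWhile (· ≠ l.foldr max 0) ++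
        l.foldr max 0 :: (l.dropWhile (· ≠ l.foldr max 0)).tail := by
  set m := l.foldr max 0 with hm
  have hd : l.dropWhile (· ≠ m) ≠ [] := by
    rw [Ne, List.dropWhile_eq_nil_iff]
    push_neg
    exact ⟨m, foldr_max_mem h, by simp⟩
  have hhead : (l.dropWhile (· ≠ m)).head hd = m := by
    have := List.head_dropWhile_not (· ≠ m : ℕ → Bool) hd
    simpa using this
  conv_lhs => rw [← List.takeWhile_append_dropWhile (p := (· ≠ m)) (l := l)]
  rw [← List.cons_head_tail hd, hhead]
  simp

lemma unfold_decomp (fuel : ℕ) {l : List ℕ} (h : l ≠ []) :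
    ∃ A B m, l = A ++ m :: B ∧
      stackSortAux (fuel+1) l = stackSortAux fuel A ++ stackSortAux fuel B ++ [m] ∧
      (∀ x ∈ A, x ≠ m) ∧ (∀ x ∈ l, x ≤ m) := by
  refine ⟨_, _, _, decomp h, ?_, ?_, fun x hx => le_foldr_max hx⟩
  · cases l with
    | nil => exact absurd rfl h
    | cons x xs => rfl
  · intro x hx
    simpa using List.mem_takeWhile_imp hx

lemma perm_aux : ∀ fuel (l : List ℕ), l.length ≤ fuel → (stackSortAux fuel l).Perm l := by
  intro fuel
  induction fuel with
  | zero =>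
    intro l hl
    have : l = [] := List.eq_nil_of_length_eq_zero (Nat.le_zero.1 hl)
    subst this; simp [stackSortAux]
  | succ n ih =>
    intro l hl
    by_cases h : l = []
    · subst h; simp [stackSortAux]
    · obtain ⟨A, B, m, hdec, hunf, _, _⟩ := unfold_decomp n h
      have hlen : l.length = A.length + (B.length + 1) := by
        rw [hdec]; simp
      have hA : A.length ≤ n := by omega
      have hB : B.length ≤ n := by omega
      rw [hunf, hdec]
      refine List.Perm.trans
        (((ih A hA).append (ih B hB)).append (List.Perm.refl [m])) ?_
      rw [List.append_assoc]
      exact List.Perm.append_left A (List.perm_append_singleton m B)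

lemma getD_right_shift (A R : List ℕ) (t : ℕ) :
    (A ++ R).getD (A.length + t) 0 = R.getD t 0 := by
  simp [List.getD_eq_getElem?_getD, List.getElem?_append]

lemma getD_mid (A B : List ℕ) (m : ℕ) :
    (A ++ m :: B).getD A.length 0 = m := by
  simpa using getD_right_shift A (m :: B) 0

lemma getD_right_shift' (A B : List ℕ) (m t : ℕ) :
    (A ++ m :: B).getD (A.length + 1 + t) 0 = B.getD t 0 := by
  have := getD_right_shift A (m :: B) (1 + t)
  rw [← Nat.add_assoc] at this
  rw [this]
  simp [List.getD_eq_getElem?_getD, Nat.add_comm 1 t]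

lemma avoids_append_left {A R : List ℕ} (h : Avoids231 (A ++ R)) : Avoids231 A := by
  rintro ⟨i, j, k, hij, hjk, hk, h1, h2⟩
  refine h ⟨i, j, k, hij, hjk, ?_, ?_, ?_⟩
  · simp only [List.length_append]; omega
  all_goals
    rw [List.getD_append _ _ _ _ (by omega), List.getD_append _ _ _ _ (by omega)]
  · exact h1
  · exact h2

lemma avoids_append_right {A R : List ℕ} (h : Avoids231 (A ++ R)) : Avoids231 R := by
  rintro ⟨i, j, k, hij, hjk, hk, h1, h2⟩
  refine h ⟨A.length + i, A.length + j, A.length + k, by omega, by omega, ?_, ?_, ?_⟩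
  · simp only [List.length_append]; omega
  all_goals rw [getD_right_shift, getD_right_shift]
  · exact h1
  · exact h2

lemma mem_iff_getD {A : List ℕ} {a : ℕ} :
    a ∈ A ↔ ∃ i, i < A.length ∧ A.getD i 0 = a := by
  rw [List.mem_iff_getElem]
  constructor
  · rintro ⟨i, hi, rfl⟩
    exact ⟨i, hi, List.getD_eq_getElem A 0 hi⟩
  · rintro ⟨i, hi, h⟩
    exact ⟨i, hi, by rw [← List.getD_eq_getElem A 0 hi, h]⟩

lemma cross_le {A B : List ℕ} {m : ℕ} (h : Avoids231 (A ++ m :: B))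
    (hA : ∀ x ∈ A, x < m) : ∀ a ∈ A, ∀ b ∈ B, a ≤ b := by
  intro a ha b hb
  obtain ⟨i, hi, hia⟩ := mem_iff_getD.1 ha
  obtain ⟨t, ht, htb⟩ := mem_iff_getD.1 hb
  by_contra hba
  push_neg at hba
  refine h ⟨i, A.length, A.length + 1 + t, hi, by omega, ?_, ?_, ?_⟩
  · simp only [List.length_append, List.length_cons]; omega
  · rw [getD_right_shift' A B m t, List.getD_append _ _ _ _ hi, hia, htb]
    exact hba
  · rw [List.getD_append _ _ _ _ hi, getD_mid, hia]
    exact hA a ha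

lemma main : ∀ fuel (l : List ℕ), l.length ≤ fuel → l.Nodup →
    (List.Pairwise (· ≤ ·) (stackSortAux fuel l) ↔ Avoids231 l) := by
  intro fuel
  induction fuel with
  | zero =>
    intro l hl _
    have hnil : l = [] := List.eq_nil_of_length_eq_zero (Nat.le_zero.1 hl)
    subst hnil
    constructor
    · rintro - ⟨i, j, k, -, -, hk, -⟩
      simp at hk
    · intro _
      simp [stackSortAux]
  | succ n ih =>
    intro l hl hnd
    by_cases h : l = []
    · subst h
      constructor
      · rintro - ⟨i, j, k, -, -, hk, -⟩
        simp at hk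
      · intro _
        simp [stackSortAux]
    · obtain ⟨A, B, m, hdec, hunf, hAne, hub⟩ := unfold_decomp n h
      have hlen : l.length = A.length + (B.length + 1) := by rw [hdec]; simp
      have hAlen : A.length ≤ n := by omega
      have hBlen : B.length ≤ n := by omega
      rw [hdec] at hnd
      have hndA : A.Nodup := (List.nodup_append.1 hnd).1
      have hndmB : (m :: B).Nodup := (List.nodup_append.1 hnd).2.1
      have hmB : m ∉ B := (List.nodup_cons.1 hndmB).1
      have hndB : B.Nodup := (List.nodup_cons.1 hndmB).2
      have hAm : ∀ x ∈ A, x < m := fun x hx =>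
        lt_of_le_of_ne (hub x (by rw [hdec]; exact List.mem_append_left _ hx)) (hAne x hx)
      have hBm : ∀ x ∈ B, x < m := fun x hx =>
        lt_of_le_of_ne
          (hub x (by rw [hdec]; exact List.mem_append_right _ (List.mem_cons_of_mem _ hx)))
          (fun hxm => hmB (hxm ▸ hx))
      have pA := perm_aux n A hAlen
      have pB := perm_aux n B hBlen
      have hub' : ∀ t, t < (A ++ m :: B).length → (A ++ m :: B).getD t 0 ≤ m := by
        intro t htl
        have hmem : (A ++ m :: B).getD t 0 ∈ (A ++ m :: B) := by
          rw [List.getD_eq_getElem _ _ htl]; exact List.getElem_mem htl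
        exact hub _ (by rw [hdec]; exact hmem)
      rw [hunf, hdec]
      constructor
      · intro hs
        have hsA : List.Pairwise (· ≤ ·) (stackSortAux n A) :=
          hs.sublist ((List.sublist_append_left _ _).trans (List.sublist_append_left _ _))
        have hsB : List.Pairwise (· ≤ ·) (stackSortAux n B) :=
          hs.sublist ((List.sublist_append_right _ _).trans (List.sublist_append_left _ _))
        have havA := (ih A hAlen hndA).1 hsA
        have havB := (ih B hBlen hndB).1 hsB
        have hcross : ∀ a ∈ stackSortAux n A, ∀ b ∈ stackSortAux n B, a ≤ b :=
          (List.pairwise_append.1 (List.pairwise_append.1 hs).1).2.2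
        rintro ⟨i, j, k, hij, hjk, hk, h1, h2⟩
        have hkl : k < A.length + (B.length + 1) := by
          simpa using hk
        rcases Nat.lt_trichotomy k A.length with hkp | hkp | hkp
        · have e_i : (A ++ m :: B).getD i 0 = A.getD i 0 := List.getD_append _ _ _ _ (by omega)
          have e_j : (A ++ m :: B).getD j 0 = A.getD j 0 := List.getD_append _ _ _ _ (by omega)
          have e_k : (A ++ m :: B).getD k 0 = A.getD k 0 := List.getD_append _ _ _ _ (by omega)
          rw [e_i, e_k] at h1
          rw [e_i, e_j] at h2
          exact havA ⟨i, j, k, hij, hjk, hkp, h1, h2⟩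
        · rw [hkp, getD_mid] at h1
          have := hub' i (by simp; omega)
          omega
        · rcases Nat.lt_trichotomy i A.length with hip | hip | hip
          · have e_i : (A ++ m :: B).getD i 0 = A.getD i 0 := List.getD_append _ _ _ _ hip
            have e_k : (A ++ m :: B).getD k 0 = B.getD (k - A.length - 1) 0 := by
              have e := getD_right_shift' A B m (k - A.length - 1)
              rwa [show A.length + 1 + (k - A.length - 1) = k by omega] at e
            have haA : A.getD i 0 ∈ A := mem_iff_getD.2 ⟨i, hip, rfl⟩
            have hbB : B.getD (k - A.length - 1) 0 ∈ B :=
              mem_iff_getD.2 ⟨_, by omega, rfl⟩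
            have hle := hcross _ (pA.mem_iff.2 haA) _ (pB.mem_iff.2 hbB)
            rw [e_i, e_k] at h1
            omega
          · rw [hip, getD_mid] at h2
            have := hub' j (by simp; omega)
            omega
          · have eB : ∀ t, A.length < t → t < (A ++ m :: B).length →
                (A ++ m :: B).getD t 0 = B.getD (t - A.length - 1) 0 := by
              intro t ht _
              have e := getD_right_shift' A B m (t - A.length - 1)
              rwa [show A.length + 1 + (t - A.length - 1) = t by omega] at e
            rw [eB i hip (by simp; omega), eB k hkp (by simp; omega)] at h1
            rw [eB i hip (by simp; omega), eB j (by omega) (by simp; omega)] at h2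
            exact havB ⟨i - A.length - 1, j - A.length - 1, k - A.length - 1,
              by omega, by omega, by omega, h1, h2⟩
      · intro hav
        have havA := avoids_append_left hav
        have havB : Avoids231 B := avoids_append_right (A := [m]) (avoids_append_right hav)
        have hsA := (ih A hAlen hndA).2 havA
        have hsB := (ih B hBlen hndB).2 havB
        have hcr := cross_le hav hAm
        refine List.pairwise_append.2 ⟨List.pairwise_append.2 ⟨hsA, hsB, ?_⟩,
          List.pairwise_singleton _ _, ?_⟩
        · intro a ha b hb
          exact hcr a (pA.mem_iff.1 ha) b (pB.mem_iff.1 hb)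
        · intro a ha b hb
          rw [List.mem_singleton] at hb
          subst hb
          rcases List.mem_append.1 ha with ha | ha
          · exact le_of_lt (hAm a (pA.mem_iff.1 ha))
          · exact le_of_lt (hBm a (pB.mem_iff.1 ha))

end SSort

/-- a permutation is sorted by `S` iff it avoids 231. -/
theorem sorted_iff_avoids231 :
    ∀ π : List ℕ, π.Nodup →
      (stackSort π = List.insertionSort (· ≤ ·) π ↔ Avoids231 π) := by
  intro π hnd
  have hperm : (stackSort π).Perm π := SSort.perm_aux π.length π le_rfl
  have hins : (List.insertionSort (· ≤ ·) π).Perm π := List.perm_insertionSort _ _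
  have hsins : List.Pairwise (· ≤ ·) (List.insertionSort (· ≤ ·) π) :=
    List.pairwise_insertionSort _ _
  have hmain := SSort.main π.length π le_rfl hnd
  constructor
  · intro he
    have hsorted : List.Pairwise (· ≤ ·) (stackSort π) := by
      rw [he]; exact hsins
    exact hmain.1 hsorted
  · intro hav
    have hsorted : List.Pairwise (· ≤ ·) (stackSort π) := hmain.2 hav
    exact List.Perm.eq_of_pairwise' hsorted hsins (hperm.trans hins.symm)
end

section
/- A permutation written in one-line notation as α n β (where n is its maximum) is stack sortable if and only if both α and β are stack sortable (as permutations of the values they contain) and every value in α is less than every value in β. -/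
/-- `l` is stack sortable: `S` sorts it into increasing order. -/
def Sortable (l : List ℕ) : Prop :=
  stackSort l = List.insertionSort (· ≤ ·) l


-- auxiliary lemmas
lemma le_foldr_max (l : List ℕ) : ∀ x ∈ l, x ≤ l.foldr max 0 := by
  induction l with
  | nil => simp
  | cons a as ih =>
    intro x hx
    simp only [List.foldr_cons]
    rcases List.mem_cons.1 hx with rfl | h
    · exact le_max_left _ _
    · exact le_trans (ih x h) (le_max_right _ _)

lemma foldr_max_mem (l : List ℕ) (h : l ≠ []) : l.foldr max 0 ∈ l := by
  induction l with
  | nil => simp at h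
  | cons a as ih =>
    simp only [List.foldr_cons]
    rcases le_total (as.foldr max 0) a with h' | h'
    · rw [max_eq_left h']
      exact List.mem_cons_self
    · rw [max_eq_right h']
      rcases eq_or_ne as [] with rfl | hne
      · simp only [List.foldr_nil] at h' ⊢
        have : a = 0 := Nat.le_zero.1 h'
        simp [this]
      · exact List.mem_cons_of_mem _ (ih hne)

lemma foldr_max_eq {l : List ℕ} {n : ℕ} (h : n ∈ l) (h2 : ∀ x ∈ l, x ≤ n) :
    l.foldr max 0 = n :=
  le_antisymm (h2 _ (foldr_max_mem l (List.ne_nil_of_mem h))) (le_foldr_max l n h)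

lemma length_takeWhile_lt {l : List ℕ} {m : ℕ} (h : m ∈ l) :
    (l.takeWhile (· ≠ m)).length < l.length := by
  rcases lt_or_eq_of_le ((List.takeWhile_sublist _).length_le) with h' | h'
  · exact h'
  · exfalso
    have := List.takeWhile_eq_self_iff.1
      ((List.takeWhile_sublist (· ≠ m)).eq_of_length h')
    simpa using this m h

lemma dropWhile_eq_cons {l : List ℕ} {m : ℕ} (h : m ∈ l) :
    l.dropWhile (· ≠ m) = m :: (l.dropWhile (· ≠ m)).tail := by
  have hne : l.dropWhile (· ≠ m) ≠ [] := by
    intro he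
    simpa using List.dropWhile_eq_nil_iff.1 he m h
  have hh := List.head_dropWhile_not (· ≠ m) hne
  have : (l.dropWhile (· ≠ m)).head hne = m := by simpa using hh
  conv_lhs => rw [← List.cons_head_tail hne, this]

lemma stackSortAux_fuel : ∀ (N : ℕ) (l : List ℕ) (f1 f2 : ℕ), l.length ≤ N →
    l.length ≤ f1 → l.length ≤ f2 → stackSortAux f1 l = stackSortAux f2 l := by
  intro N
  induction N with
  | zero =>
    intro l f1 f2 hN _ _
    have : l = [] := List.length_eq_zero_iff.1 (Nat.le_zero.1 hN)
    subst this
    cases f1 <;> cases f2 <;> simp [stackSortAux]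
  | succ N ih =>
    intro l f1 f2 hN h1 h2
    rcases l with _ | ⟨x, xs⟩
    · cases f1 <;> cases f2 <;> simp [stackSortAux]
    · rcases f1 with _ | f1
      · simp at h1
      rcases f2 with _ | f2
      · simp at h2
      simp only [stackSortAux]
      have hmem : (x :: xs).foldr max 0 ∈ (x :: xs) := foldr_max_mem _ (by simp)
      have ht := length_takeWhile_lt hmem
      have hd : (((x :: xs).dropWhile (· ≠ (x :: xs).foldr max 0)).tail).length
          < (x :: xs).length := by
        have := (List.dropWhile_sublist (p := (· ≠ (x :: xs).foldr max 0))
          (l := x :: xs)).length_le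
        rw [dropWhile_eq_cons hmem] at this
        simp only [List.length_cons] at this ⊢
        omega
      simp only [List.length_cons] at h1 h2 hN ht hd
      rw [ih _ f1 f2 (by omega) (by omega) (by omega),
          ih _ f1 f2 (by omega) (by omega) (by omega)]

lemma stackSortAux_eq {l : List ℕ} {f : ℕ} (h : l.length ≤ f) :
    stackSortAux f l = stackSort l :=
  stackSortAux_fuel l.length l f l.length le_rfl h le_rfl

lemma stackSort_eq (l : List ℕ) (h : l ≠ []) :
    stackSort l = stackSort (l.takeWhile (· ≠ l.foldr max 0)) ++
      stackSort ((l.dropWhile (· ≠ l.foldr max 0)).tail) ++ [l.foldr max 0] := by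
  rcases l with _ | ⟨x, xs⟩
  · simp at h
  have hmem : (x :: xs).foldr max 0 ∈ (x :: xs) := foldr_max_mem _ (by simp)
  have ht := length_takeWhile_lt hmem
  have hd : (((x :: xs).dropWhile (· ≠ (x :: xs).foldr max 0)).tail).length
      < (x :: xs).length := by
    have := (List.dropWhile_sublist (p := (· ≠ (x :: xs).foldr max 0))
      (l := x :: xs)).length_le
    rw [dropWhile_eq_cons hmem] at this
    simp only [List.length_cons] at this ⊢
    omega
  show stackSortAux (x :: xs).length (x :: xs) = _
  simp only [List.length_cons, stackSortAux]
  simp only [List.length_cons] at ht hd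
  rw [stackSortAux_eq (by omega), stackSortAux_eq (by omega)]

lemma stackSort_perm_aux : ∀ (N : ℕ) (l : List ℕ), l.length ≤ N →
    (stackSort l).Perm l := by
  intro N
  induction N with
  | zero =>
    intro l hN
    have : l = [] := List.length_eq_zero_iff.1 (Nat.le_zero.1 hN)
    subst this
    simp [stackSort, stackSortAux]
  | succ N ih =>
    intro l hN
    rcases eq_or_ne l [] with rfl | h
    · simp [stackSort, stackSortAux]
    have hmem : l.foldr max 0 ∈ l := foldr_max_mem l h
    have ht := length_takeWhile_lt hmem
    have hd : ((l.dropWhile (· ≠ l.foldr max 0)).tail).length < l.length := by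
      have := (List.dropWhile_sublist (p := (· ≠ l.foldr max 0)) (l := l)).length_le
      rw [dropWhile_eq_cons hmem] at this
      simp only [List.length_cons] at this
      omega
    rw [stackSort_eq l h]
    have p1 := ih (l.takeWhile (· ≠ l.foldr max 0)) (by omega)
    have p2 := ih ((l.dropWhile (· ≠ l.foldr max 0)).tail) (by omega)
    refine ((p1.append p2).append (List.Perm.refl _)).trans ?_
    rw [List.append_assoc]
    refine ((List.Perm.refl _).append List.perm_append_comm).trans ?_
    rw [List.singleton_append, ← dropWhile_eq_cons hmem,
      List.takeWhile_append_dropWhile]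

lemma stackSort_perm (l : List ℕ) : (stackSort l).Perm l :=
  stackSort_perm_aux l.length l le_rfl

lemma sortable_iff_sorted (l : List ℕ) :
    Sortable l ↔ (stackSort l).Pairwise (· ≤ ·) := by
  constructor
  · intro h
    rw [Sortable] at h
    rw [h]
    exact List.pairwise_insertionSort _ _
  · intro h
    exact List.Perm.eq_of_pairwise' h
      (List.pairwise_insertionSort _ _)
      ((stackSort_perm l).trans (List.perm_insertionSort _ l).symm)

lemma sorted_append_iff {l r : List ℕ} :
    (l ++ r).Pairwise (· ≤ ·) ↔ l.Pairwise (· ≤ ·) ∧ r.Pairwise (· ≤ ·) ∧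
      ∀ a ∈ l, ∀ b ∈ r, a ≤ b :=
  List.pairwise_append

/-- `α n β` (with `n` the maximum) is stack sortable iff `α` and
`β` are stack sortable and every value of `α` is less than every value of `β`. -/
theorem sortable_decomposition :
    ∀ (α β : List ℕ) (n : ℕ), (α ++ [n] ++ β).Nodup →
      (∀ x ∈ α ++ β, x < n) →
      (Sortable (α ++ [n] ++ β) ↔
        Sortable α ∧ Sortable β ∧ ∀ a ∈ α, ∀ b ∈ β, a < b) := by
  intro α β n hnd hlt
  have hmax : ∀ x ∈ α ++ [n] ++ β, x ≤ n := by
    intro x hx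
    simp only [List.append_assoc, List.mem_append, List.mem_singleton] at hx
    rcases hx with hx | rfl | hx
    · exact (hlt x (by simp [hx])).le
    · exact le_rfl
    · exact (hlt x (by simp [hx])).le
  have hfold : (α ++ [n] ++ β).foldr max 0 = n := foldr_max_eq (by simp) hmax
  have htake : (α ++ [n] ++ β).takeWhile (· ≠ n) = α := by
    have h1 : α.takeWhile (· ≠ n) = α :=
      List.takeWhile_eq_self_iff.2 (fun x hx => by
        simpa using (hlt x (by simp [hx])).ne)
    rw [List.append_assoc, List.takeWhile_append, h1, if_pos rfl]
    simp
  have hdrop : (α ++ [n] ++ β).dropWhile (· ≠ n) = [n] ++ β := by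
    rw [List.append_assoc]
    have h2 := List.takeWhile_append_dropWhile (p := (· ≠ n)) (l := α ++ ([n] ++ β))
    rw [show (α ++ ([n] ++ β)).takeWhile (· ≠ n) = α from by
      rw [← List.append_assoc]; exact htake] at h2
    exact List.append_cancel_left h2
  have hS : stackSort (α ++ [n] ++ β) = stackSort α ++ stackSort β ++ [n] := by
    rw [stackSort_eq _ (by simp), hfold, htake, hdrop]
    simp
  have mα : ∀ x, x ∈ stackSort α ↔ x ∈ α := fun x => (stackSort_perm α).mem_iff
  have mβ : ∀ x, x ∈ stackSort β ↔ x ∈ β := fun x => (stackSort_perm β).mem_iff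
  rw [sortable_iff_sorted, sortable_iff_sorted, sortable_iff_sorted, hS]
  constructor
  · intro h
    rw [sorted_append_iff, sorted_append_iff] at h
    obtain ⟨⟨h1, h2, h12⟩, _, _⟩ := h
    refine ⟨h1, h2, ?_⟩
    intro a ha b hb
    have hab := h12 a ((mα a).2 ha) b ((mβ b).2 hb)
    have hne : a ≠ b := by
      intro he
      have hdisj : List.Disjoint (α ++ [n]) β := List.disjoint_of_nodup_append hnd
      exact hdisj (by simp [ha]) (he ▸ hb)
    omega
  · rintro ⟨h1, h2, h12⟩
    rw [sorted_append_iff, sorted_append_iff]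
    refine ⟨⟨h1, h2, ?_⟩, by simp, ?_⟩
    · intro a ha b hb
      exact (h12 a ((mα a).1 ha) b ((mβ b).1 hb)).le
    · intro x hx y hy
      simp only [List.mem_singleton] at hy
      subst hy
      rcases List.mem_append.1 hx with hx | hx
      · exact (hlt x (by simp [(mα x).1 hx])).le
      · exact (hlt x (by simp [(mβ x).1 hx])).le
end

section
/- The post-order reading of any decreasing binary tree is in the image of the stack sorting operator S. -/
lemma takeWhile_ne_append (a : List ℕ) (n : ℕ) (b : List ℕ) (h : ∀ x ∈ a, x ≠ n) :
    (a ++ n :: b).takeWhile (· ≠ n) = a := by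
  induction a with
  | nil => simp [List.takeWhile]
  | cons y a ih =>
    rw [List.cons_append, List.takeWhile_cons, if_pos (by simp [h y (by simp)]),
      ih (fun x hx => h x (by simp [hx]))]

lemma dropWhile_ne_append (a : List ℕ) (n : ℕ) (b : List ℕ) (h : ∀ x ∈ a, x ≠ n) :
    (a ++ n :: b).dropWhile (· ≠ n) = n :: b := by
  induction a with
  | nil => simp [List.dropWhile]
  | cons y a ih =>
    rw [List.cons_append, List.dropWhile_cons_of_pos (by simp [h y (by simp)]),
      ih (fun x hx => h x (by simp [hx]))]

lemma foldr_max_le (l : List ℕ) (n : ℕ) (h : ∀ x ∈ l, x ≤ n) : l.foldr max 0 ≤ n := by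
  induction l with
  | nil => simp
  | cons y l ih =>
    simp only [List.foldr_cons]
    exact max_le (h y (by simp)) (ih fun x hx => h x (by simp [hx]))

lemma foldr_max_eq_s5 (a : List ℕ) (n : ℕ) (b : List ℕ)
    (ha : ∀ x ∈ a, x ≤ n) (hb : ∀ x ∈ b, x ≤ n) :
    (a ++ n :: b).foldr max 0 = n := by
  induction a with
  | nil =>
    simp only [List.nil_append, List.foldr_cons]
    exact max_eq_left (foldr_max_le b n hb)
  | cons y a ih =>
    simp only [List.cons_append, List.foldr_cons]
    rw [ih (fun x hx => ha x (by simp [hx]))]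
    exact max_eq_right (ha y (by simp))

lemma stackSortAux_inorder (fuel : ℕ) :
    ∀ T : BTree, T.Decreasing → T.inorder.length ≤ fuel →
      stackSortAux fuel T.inorder = T.postorder := by
  induction fuel with
  | zero =>
    intro T _ hlen
    cases T with
    | leaf => rfl
    | node l n r =>
      simp [BTree.inorder] at hlen
  | succ f ih =>
    intro T hdec hlen
    cases T with
    | leaf => rfl
    | node l n r =>
      obtain ⟨hl, hr, hlt, hrt⟩ := hdec
      have hin : (BTree.node l n r).inorder = l.inorder ++ n :: r.inorder := by
        simp [BTree.inorder]
      obtain ⟨x, xs, hx⟩ : ∃ x xs, l.inorder ++ n :: r.inorder = x :: xs := by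
        cases h : l.inorder ++ n :: r.inorder with
        | nil => simp at h
        | cons x xs => exact ⟨x, xs, rfl⟩
      have hne : ∀ y ∈ l.inorder, y ≠ n := fun y hy => Nat.ne_of_lt (hlt y hy)
      have hm : (l.inorder ++ n :: r.inorder).foldr max 0 = n :=
        foldr_max_eq_s5 _ _ _ (fun y hy => le_of_lt (hlt y hy)) (fun y hy => le_of_lt (hrt y hy))
      have hlen' : l.inorder.length + (r.inorder.length + 1) ≤ f + 1 := by
        rw [hin] at hlen; simpa using hlen
      rw [hin, hx]
      show stackSortAux f ((x :: xs).takeWhile (· ≠ (x :: xs).foldr max 0)) ++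
          stackSortAux f (((x :: xs).dropWhile (· ≠ (x :: xs).foldr max 0)).tail) ++
          [(x :: xs).foldr max 0] = _
      rw [← hx, hm, takeWhile_ne_append _ _ _ hne, dropWhile_ne_append _ _ _ hne]
      simp only [List.tail_cons]
      rw [ih l hl (by omega), ih r hr (by omega)]
      simp [BTree.postorder]

/-- the post-order reading of any decreasing binary tree (with
distinct labels) is in the image of `S`. -/
theorem postorder_mem_image_stackSort :
    ∀ T : BTree, T.Decreasing → T.inorder.Nodup →
      ∃ π : List ℕ, π.Nodup ∧ stackSort π = T.postorder := by
  intro T hdec hnodup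
  exact ⟨T.inorder, hnodup, stackSortAux_inorder T.inorder.length T hdec le_rfl⟩
end

section
/- For every 231-avoiding permutation π, the in-order decreasing binary trees T_in(π) and T_in(P(π)) have the same underlying unlabeled tree shape. -/
namespace TPaux

lemma le_foldr_max {l : List ℕ} {x : ℕ} (h : x ∈ l) : x ≤ l.foldr max 0 := by
  induction l with
  | nil => simp at h
  | cons y ys ih =>
    rcases List.mem_cons.1 h with h | h
    · subst h; exact le_max_left _ _
    · exact le_trans (ih h) (le_max_right _ _)

lemma foldr_max_le {l : List ℕ} {n : ℕ} (h : ∀ x ∈ l, x ≤ n) : l.foldr max 0 ≤ n := by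
  induction l with
  | nil => simp
  | cons y ys ih =>
    simp only [List.foldr_cons]
    exact max_le (h y (by simp)) (ih fun x hx => h x (by simp [hx]))

lemma foldr_max_mem {l : List ℕ} (h : l ≠ []) : l.foldr max 0 ∈ l := by
  induction l with
  | nil => simp at h
  | cons y ys ih =>
    simp only [List.foldr_cons]
    rcases eq_or_ne ys [] with rfl | hys
    · simp
    · rcases le_or_gt (ys.foldr max 0) y with hle | hlt
      · simp [Nat.max_eq_left hle]
      · simp [Nat.max_eq_right (le_of_lt hlt), ih hys]

lemma foldr_max_perm_range {l : List ℕ} {n : ℕ} (h1 : 1 ≤ n)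
    (h : l.Perm (List.range' 1 n)) : l.foldr max 0 = n := by
  refine le_antisymm (foldr_max_le fun x hx => ?_) (le_foldr_max ?_)
  · have := (h.mem_iff).1 hx
    rw [List.mem_range'_1] at this
    omega
  · rw [h.mem_iff, List.mem_range'_1]
    omega

lemma split_eq {l : List ℕ} {m : ℕ} (h : m ∈ l) :
    l = l.takeWhile (· ≠ m) ++ m :: (l.dropWhile (· ≠ m)).tail := by
  induction l with
  | nil => simp at h
  | cons y ys ih =>
    by_cases hy : y = m
    · subst hy; simp
    · have hm : m ∈ ys := by
        rcases List.mem_cons.1 h with h | h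
        · exact absurd h.symm hy
        · exact h
      simpa [hy] using ih hm

lemma takeWhile_app {p : ℕ → Bool} {A B : List ℕ} {c : ℕ}
    (hA : ∀ a ∈ A, p a) (hc : p c = false) :
    (A ++ c :: B).takeWhile p = A ∧ (A ++ c :: B).dropWhile p = c :: B := by
  induction A with
  | nil => simp [List.takeWhile_cons, List.dropWhile_cons, hc]
  | cons a as ih =>
    have h2 := ih (fun x hx => hA x (by simp [hx]))
    simp [List.takeWhile_cons, List.dropWhile_cons, hA a (by simp), h2.1, h2.2]

end TPaux
namespace TPaux

lemma length_split {l : List ℕ} {m : ℕ} (h : m ∈ l) :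
    (l.takeWhile (· ≠ m)).length + ((l.dropWhile (· ≠ m)).tail).length + 1 = l.length := by
  have := congrArg List.length (split_eq h)
  simp only [List.length_append, List.length_cons] at this
  omega

lemma TinAux_eq : ∀ fuel (l : List ℕ), l.length ≤ fuel → TinAux fuel l = Tin l := by
  intro fuel
  induction fuel using Nat.strong_induction_on with
  | _ fuel ih =>
    intro l hl
    rcases l with _ | ⟨x, xs⟩
    · cases fuel <;> rfl
    · rcases fuel with _ | f
      · simp at hl
      · have hm : ((x::xs).foldr max 0) ∈ (x::xs) := foldr_max_mem (by simp)
        have hlen := length_split hm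
        simp only [List.length_cons] at hl hlen
        show BTree.node (TinAux f ((x::xs).takeWhile (· ≠ (x::xs).foldr max 0)))
              ((x::xs).foldr max 0)
              (TinAux f (((x::xs).dropWhile (· ≠ (x::xs).foldr max 0)).tail))
            = BTree.node (TinAux xs.length ((x::xs).takeWhile (· ≠ (x::xs).foldr max 0)))
              ((x::xs).foldr max 0)
              (TinAux xs.length (((x::xs).dropWhile (· ≠ (x::xs).foldr max 0)).tail))
        rw [ih f (by omega) _ (by omega), ih f (by omega) _ (by omega),
          ih xs.length (by omega) _ (by omega), ih xs.length (by omega) _ (by omega)]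

lemma Tin_cons {l : List ℕ} (h : l ≠ []) :
    Tin l = .node (Tin (l.takeWhile (· ≠ l.foldr max 0))) (l.foldr max 0)
                  (Tin ((l.dropWhile (· ≠ l.foldr max 0)).tail)) := by
  rcases l with _ | ⟨x, xs⟩
  · simp at h
  · have hm : ((x::xs).foldr max 0) ∈ (x::xs) := foldr_max_mem (by simp)
    have hlen := length_split hm
    simp only [List.length_cons] at hlen
    show BTree.node (TinAux xs.length ((x::xs).takeWhile (· ≠ (x::xs).foldr max 0)))
          ((x::xs).foldr max 0)
          (TinAux xs.length (((x::xs).dropWhile (· ≠ (x::xs).foldr max 0)).tail)) = _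
    rw [TinAux_eq _ _ (by omega), TinAux_eq _ _ (by omega)]

lemma PpermAux_eq : ∀ fuel (l : List ℕ), l.length ≤ fuel → PpermAux fuel l = Pperm l := by
  intro fuel
  induction fuel using Nat.strong_induction_on with
  | _ fuel ih =>
    intro l hl
    rcases l with _ | ⟨x, xs⟩
    · cases fuel <;> rfl
    · rcases fuel with _ | f
      · simp at hl
      · have hm : ((x::xs).foldr max 0) ∈ (x::xs) := foldr_max_mem (by simp)
        have hlen := length_split hm
        simp only [List.length_cons] at hl hlen
        show (PpermAux f ((x::xs).takeWhile (· ≠ (x::xs).foldr max 0))).map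
              (· + (((x::xs).dropWhile (· ≠ (x::xs).foldr max 0)).tail).length)
              ++ [(x::xs).foldr max 0] ++
              PpermAux f ((((x::xs).dropWhile (· ≠ (x::xs).foldr max 0)).tail).map
                (· - ((x::xs).takeWhile (· ≠ (x::xs).foldr max 0)).length))
            = (PpermAux xs.length ((x::xs).takeWhile (· ≠ (x::xs).foldr max 0))).map
              (· + (((x::xs).dropWhile (· ≠ (x::xs).foldr max 0)).tail).length)
              ++ [(x::xs).foldr max 0] ++
              PpermAux xs.length ((((x::xs).dropWhile (· ≠ (x::xs).foldr max 0)).tail).map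
                (· - ((x::xs).takeWhile (· ≠ (x::xs).foldr max 0)).length))
        rw [ih f (by omega) _ (by omega), ih f (by omega) _ (by rw [List.length_map]; omega),
          ih xs.length (by omega) _ (by omega), ih xs.length (by omega) _ (by rw [List.length_map]; omega)]

lemma Pperm_cons {l : List ℕ} (h : l ≠ []) :
    Pperm l = (Pperm (l.takeWhile (· ≠ l.foldr max 0))).map
        (· + ((l.dropWhile (· ≠ l.foldr max 0)).tail).length)
      ++ [l.foldr max 0] ++
      Pperm (((l.dropWhile (· ≠ l.foldr max 0)).tail).map
        (· - (l.takeWhile (· ≠ l.foldr max 0)).length)) := by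
  rcases l with _ | ⟨x, xs⟩
  · simp at h
  · have hm : ((x::xs).foldr max 0) ∈ (x::xs) := foldr_max_mem (by simp)
    have hlen := length_split hm
    simp only [List.length_cons] at hlen
    show (PpermAux xs.length ((x::xs).takeWhile (· ≠ (x::xs).foldr max 0))).map
          (· + (((x::xs).dropWhile (· ≠ (x::xs).foldr max 0)).tail).length)
          ++ [(x::xs).foldr max 0] ++
          PpermAux xs.length ((((x::xs).dropWhile (· ≠ (x::xs).foldr max 0)).tail).map
            (· - ((x::xs).takeWhile (· ≠ (x::xs).foldr max 0)).length)) = _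
    rw [PpermAux_eq _ _ (by omega), PpermAux_eq _ _ (by rw [List.length_map]; omega)]

end TPaux
namespace TPaux

lemma shape_map (f : ℕ → ℕ) : ∀ t : BTree, (t.map f).shape = t.shape := by
  intro t
  induction t with
  | leaf => rfl
  | node l n r ihl ihr => simp [BTree.map, BTree.shape, ihl, ihr]

lemma foldr_max_map_add {l : List ℕ} (c : ℕ) (h : l ≠ []) :
    (l.map (· + c)).foldr max 0 = l.foldr max 0 + c := by
  induction l with
  | nil => simp at h
  | cons y ys ih =>
    rcases eq_or_ne ys [] with rfl | hys
    · simp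
    · simp only [List.map_cons, List.foldr_cons, ih hys]
      omega

lemma pred_add (m c : ℕ) :
    (fun x => decide (x ≠ m + c)) ∘ (· + c) = fun x => decide (x ≠ m) := by
  funext x
  simp

lemma Tin_map_add (c : ℕ) : ∀ n (l : List ℕ), l.length ≤ n →
    Tin (l.map (· + c)) = (Tin l).map (· + c) := by
  intro n
  induction n using Nat.strong_induction_on with
  | _ n ih =>
    intro l hl
    rcases eq_or_ne l [] with rfl | hne
    · rfl
    · have hm : l.foldr max 0 ∈ l := foldr_max_mem hne
      have hlen := length_split hm
      have hne' : l.map (· + c) ≠ [] := by simpa using hne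
      rw [Tin_cons hne, Tin_cons hne', foldr_max_map_add c hne]
      rw [List.takeWhile_map, List.dropWhile_map, pred_add, ← List.map_tail]
      rcases n with _ | n
      · exfalso; have := List.length_pos_iff.2 hne; omega
      · rw [ih n (by omega) _ (by omega), ih n (by omega) _ (by omega)]
        rfl

lemma Tin_shape_map_add (c : ℕ) (l : List ℕ) :
    (Tin (l.map (· + c))).shape = (Tin l).shape := by
  rw [Tin_map_add c l.length l le_rfl, shape_map]

lemma getD_app_cons (A B : List ℕ) (c i : ℕ) :
    (A ++ c :: B).getD (A.length + 1 + i) 0 = B.getD i 0 := by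
  rw [List.getD_append_right _ _ _ _ (by omega)]
  have h : A.length + 1 + i - A.length = i + 1 := by omega
  rw [h]
  rfl

lemma avoids_prefix {A B : List ℕ} (h : Avoids231 (A ++ B)) : Avoids231 A := by
  rintro ⟨i, j, k, hij, hjk, hk, h1, h2⟩
  refine h ⟨i, j, k, hij, hjk, by simp; omega, ?_, ?_⟩
  · rwa [List.getD_append _ _ _ _ (by omega), List.getD_append _ _ _ _ (by omega)]
  · rwa [List.getD_append _ _ _ _ (by omega), List.getD_append _ _ _ _ (by omega)]

lemma avoids_suffix {A B : List ℕ} {c : ℕ} (h : Avoids231 (A ++ c :: B)) :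
    Avoids231 B := by
  rintro ⟨i, j, k, hij, hjk, hk, h1, h2⟩
  refine h ⟨A.length + 1 + i, A.length + 1 + j, A.length + 1 + k,
    by omega, by omega, by simp; omega, ?_, ?_⟩
  · rwa [getD_app_cons, getD_app_cons]
  · rwa [getD_app_cons, getD_app_cons]

lemma getD_map_sub (B : List ℕ) (a i : ℕ) (hi : i < B.length) :
    (B.map (· - a)).getD i 0 = B.getD i 0 - a := by
  rw [List.getD_eq_getElem _ _ (by simpa using hi), List.getD_eq_getElem _ _ hi,
    List.getElem_map]

lemma avoids_map_sub {B : List ℕ} (a : ℕ) (h : Avoids231 B) :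
    Avoids231 (B.map (· - a)) := by
  rintro ⟨i, j, k, hij, hjk, hk, h1, h2⟩
  simp only [List.length_map] at hk
  rw [getD_map_sub _ _ _ (by omega), getD_map_sub _ _ _ (by omega)] at h1 h2
  exact h ⟨i, j, k, hij, hjk, hk, by omega, by omega⟩

lemma map_sub_range' (a s k : ℕ) : (List.range' (a + s) k).map (· - a) = List.range' s k := by
  rw [← List.map_add_range' (a := a) s k, List.map_map]
  have h : ((· - a) ∘ (a + ·) : ℕ → ℕ) = id := by funext x; simp
  rw [h, List.map_id]

lemma map_add_range'' (c s k : ℕ) : (List.range' s k).map (· + c) = List.range' (s + c) k := by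
  have h : ((· + c) : ℕ → ℕ) = (c + ·) := by funext x; omega
  rw [h, List.map_add_range', Nat.add_comm]

end TPaux
namespace TPaux

lemma main_aux : ∀ n (π : List ℕ), π.length = n → π.Perm (List.range' 1 n) → Avoids231 π →
    (Pperm π).Perm (List.range' 1 n) ∧ (Tin π).shape = (Tin (Pperm π)).shape := by
  intro n
  induction n using Nat.strong_induction_on with
  | _ n ih =>
    intro π hlen hperm hav
    rcases eq_or_ne π [] with rfl | hne
    · simp only [List.length_nil] at hlen
      subst hlen
      exact ⟨List.Perm.refl _, rfl⟩
    · have hn1 : 1 ≤ n := by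
        have := List.length_pos_iff.2 hne; omega
      have hmemπ : ∀ x ∈ π, 1 ≤ x ∧ x ≤ n := by
        intro x hx
        have := hperm.mem_iff.1 hx
        rw [List.mem_range'_1] at this
        omega
      have hnπ : n ∈ π := by
        rw [hperm.mem_iff, List.mem_range'_1]; omega
      have hfold : π.foldr max 0 = n := foldr_max_perm_range hn1 hperm
      have hTπ := Tin_cons hne
      rw [hfold] at hTπ
      have hPp := Pperm_cons hne
      rw [hfold] at hPp
      set α := π.takeWhile (· ≠ n) with hαdef
      set β := (π.dropWhile (· ≠ n)).tail with hβdef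
      have hsplit : π = α ++ n :: β := split_eq hnπ
      have hlens : α.length + β.length + 1 = n := by
        have := length_split hnπ
        rw [hlen] at this
        exact this
      have hndπ : π.Nodup := (hperm.nodup_iff).2 (List.nodup_range' (s := 1) (n := n))
      have hnd : α.Nodup ∧ (n :: β).Nodup ∧ α.Disjoint (n :: β) := by
        rw [hsplit, List.nodup_append] at hndπ; exact ⟨hndπ.1, hndπ.2.1, fun a ha hb => hndπ.2.2 a ha a hb rfl⟩
      have hαnm : ∀ a ∈ α, a ≠ n := by
        intro a ha
        have := List.mem_takeWhile_imp ha
        simpa using this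
      have hmemα : ∀ a ∈ α, a ∈ π := by
        intro a ha; rw [hsplit]; exact List.mem_append_left _ ha
      have hmemβ : ∀ b ∈ β, b ∈ π := by
        intro b hb; rw [hsplit]
        exact List.mem_append_right _ (List.mem_cons_of_mem _ hb)
      have hαlt : ∀ a ∈ α, a < n := by
        intro a ha
        have h1 := hmemπ a (hmemα a ha)
        have h2 := hαnm a ha
        omega
      have hgetα : ∀ i, i < α.length → π.getD i 0 = α.getD i 0 := by
        intro i hi
        conv_lhs => rw [hsplit]
        exact List.getD_append _ _ _ _ hi
      have hgetm : π.getD α.length 0 = n := by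
        conv_lhs => rw [hsplit]
        rw [List.getD_append_right _ _ _ _ le_rfl]
        simp
      have hgetβ : ∀ i, π.getD (α.length + 1 + i) 0 = β.getD i 0 := by
        intro i
        conv_lhs => rw [hsplit]
        exact getD_app_cons _ _ _ _
      have hαβ : ∀ a ∈ α, ∀ b ∈ β, a < b := by
        intro a ha b hb
        by_contra hcon
        push_neg at hcon
        have hne' : a ≠ b := fun he => hnd.2.2 ha (he ▸ List.mem_cons_of_mem _ hb)
        obtain ⟨i, hi, hia⟩ := List.mem_iff_getElem.1 ha
        obtain ⟨k, hk, hkb⟩ := List.mem_iff_getElem.1 hb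
        refine hav ⟨i, α.length, α.length + 1 + k, by omega, by omega, by omega, ?_, ?_⟩
        · rw [hgetβ, hgetα i (by omega), List.getD_eq_getElem _ _ hi, hia,
            List.getD_eq_getElem _ _ hk, hkb]
          omega
        · rw [hgetα i (by omega), hgetm, List.getD_eq_getElem _ _ hi, hia]
          have h1 := hmemπ a (hmemα a ha)
          have h2 := hαnm a ha
          omega
      have havα : Avoids231 α := avoids_prefix (hsplit ▸ hav)
      have havβ : Avoids231 β := avoids_suffix (A := α) (hsplit ▸ hav)
      have havβ' : Avoids231 (β.map (· - α.length)) := avoids_map_sub _ havβ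
      have hα_le : ∀ a ∈ α, a ≤ α.length := by
        intro a ha
        by_contra hcon
        push_neg at hcon
        have hsub : List.range' 1 a ⊆ α := by
          intro x hx
          rw [List.mem_range'_1] at hx
          have hxπ : x ∈ π := by
            rw [hperm.mem_iff, List.mem_range'_1]
            have := hαlt a ha
            omega
          rw [hsplit] at hxπ
          rcases List.mem_append.1 hxπ with h | h
          · exact h
          · rcases List.mem_cons.1 h with rfl | h
            · exfalso; have := hαlt a ha; omega
            · exfalso; have := hαβ a ha x h; omega
        have := ((List.nodup_range' (s := 1) (n := a)).subperm hsub).length_le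
        simp at this
        omega
      have hαperm : α.Perm (List.range' 1 α.length) := by
        have hsub : α ⊆ List.range' 1 α.length := by
          intro a ha
          rw [List.mem_range'_1]
          have h1 := hmemπ a (hmemα a ha)
          have h2 := hα_le a ha
          omega
        exact (hnd.1.subperm hsub).perm_of_length_le (by simp)
      have hβmem : ∀ b ∈ β, α.length + 1 ≤ b ∧ b ≤ α.length + β.length := by
        intro b hb
        have h1 := hmemπ b (hmemβ b hb)
        have hbm : b ≠ n := by
          rintro rfl
          exact (List.nodup_cons.1 hnd.2.1).1 hb
        have hbα : b ∉ α := fun hbα => lt_irrefl b (hαβ b hbα b hb)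
        have hble : ¬ b ≤ α.length := by
          intro hble
          exact hbα (hαperm.mem_iff.2 (by rw [List.mem_range'_1]; omega))
        omega
      have hβperm : β.Perm (List.range' (α.length + 1) β.length) := by
        have hsub : β ⊆ List.range' (α.length + 1) β.length := by
          intro b hb
          rw [List.mem_range'_1]
          have := hβmem b hb
          omega
        exact ((List.nodup_cons.1 hnd.2.1).2.subperm hsub).perm_of_length_le (by simp)
      have hβ'perm : (β.map (· - α.length)).Perm (List.range' 1 β.length) := by
        have h := hβperm.map (· - α.length)
        rwa [map_sub_range'] at h
      obtain ⟨ihα1, ihα2⟩ := ih α.length (by omega) α rfl hαperm havα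
      obtain ⟨ihβ1, ihβ2⟩ := ih β.length (by omega) (β.map (· - α.length))
        (by rw [List.length_map]) hβ'perm havβ'
      set A := (Pperm α).map (· + β.length) with hAdef
      set B := Pperm (β.map (· - α.length)) with hBdef
      have hAperm : A.Perm (List.range' (1 + β.length) α.length) := by
        have h := ihα1.map (· + β.length)
        rwa [map_add_range''] at h
      have hcat : List.range' 1 β.length ++ List.range' (1 + β.length) α.length ++ [n] =
          List.range' 1 n := by
        have h1 := @List.range'_append 1 β.length α.length 1
        simp only [one_mul, Nat.add_comm β.length α.length] at h1
        rw [h1]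
        have hm' : [n] = List.range' (1 + (α.length + β.length)) 1 := by
          rw [List.range'_one]; congr 1; omega
        rw [hm']
        have h2 := @List.range'_append 1 (α.length + β.length) 1 1
        simp only [one_mul] at h2
        rw [h2]
        congr 1
      have hPperm : (Pperm π).Perm (List.range' 1 n) := by
        rw [hPp]
        refine (List.perm_append_comm).trans ?_
        refine ((ihβ1.append (hAperm.append (List.Perm.refl [n])))).trans ?_
        rw [← List.append_assoc, hcat]
      refine ⟨hPperm, ?_⟩
      have hPne : Pperm π ≠ [] := by rw [hPp]; simp
      have hPcons : Pperm π = A ++ n :: B := by rw [hPp]; simp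
      have hfoldP : (Pperm π).foldr max 0 = n := foldr_max_perm_range hn1 hPperm
      have hAne : ∀ a ∈ A, a ≠ n := by
        intro a ha
        rw [hAdef, List.mem_map] at ha
        obtain ⟨p, hp, rfl⟩ := ha
        have := ihα1.mem_iff.1 hp
        rw [List.mem_range'_1] at this
        omega
      have htw := takeWhile_app (p := fun x => decide (x ≠ n)) (A := A) (B := B) (c := n)
        (fun a ha => by simp [hAne a ha]) (by simp)
      have hTP : Tin (Pperm π) = .node (Tin A) n (Tin B) := by
        have h0 := Tin_cons hPne
        rw [hfoldP, hPcons] at h0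
        rw [htw.1, htw.2] at h0
        rw [hPcons]
        rw [h0]
        simp
      have hββ' : (β.map (· - α.length)).map (· + α.length) = β := by
        rw [List.map_map]
        conv_rhs => rw [← List.map_id β]
        apply List.map_congr_left
        intro b hb
        have := hβmem b hb
        simp only [Function.comp_apply, id_eq]
        omega
      have e1 : (Tin A).shape = (Tin α).shape := by
        rw [hAdef, Tin_shape_map_add]
        exact ihα2.symm
      have e2 : (Tin B).shape = (Tin β).shape := by
        calc (Tin B).shape = (Tin (β.map (· - α.length))).shape := ihβ2.symm
          _ = (Tin ((β.map (· - α.length)).map (· + α.length))).shape :=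
              (Tin_shape_map_add _ _).symm
          _ = (Tin β).shape := by rw [hββ']
      rw [hTπ, hTP]
      simp [BTree.shape, e1, e2]

end TPaux

/-- for every 231-avoiding permutation `π`, the trees `T_in(π)`
and `T_in(P(π))` have the same underlying unlabeled shape. -/
theorem Tin_Pperm_shape :
    ∀ π : List ℕ, π.Perm (List.range' 1 π.length) → Avoids231 π →
      (Tin π).shape = (Tin (Pperm π)).shape := by
  intro π hperm hav
  exact (TPaux.main_aux π.length π rfl hperm hav).2
end

section
/- The bijection P preserves the positions of left-to-right maxima and of right-to-left maxima: for every 231-avoiding permutation π, an index i is a position of a left-to-right (resp. right-to-left) maximum of π if and only if it is one of P(π). -/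
namespace PP12

lemma foldr_max_mem (l : List ℕ) (h : l ≠ []) : l.foldr max 0 ∈ l := by
  induction l with
  | nil => simp at h
  | cons x xs ih =>
    simp only [List.foldr_cons]
    rcases le_or_gt (xs.foldr max 0) x with h1 | h1
    · simp [max_eq_left h1]
    · rcases xs with _ | ⟨y, ys⟩
      · simp at h1
      · simp only [List.mem_cons]
        right
        have := ih (by simp)
        rw [max_eq_right h1.le]
        simpa using this

lemma le_foldr_max (l : List ℕ) : ∀ x ∈ l, x ≤ l.foldr max 0 := by
  induction l with
  | nil => simp
  | cons y ys ih =>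
    intro x hx
    rcases List.mem_cons.mp hx with rfl | hx
    · simp
    · exact le_trans (ih x hx) (by simp)

lemma foldr_max_eq (l : List ℕ) (h : l ≠ []) (hp : l.Perm (List.range' 1 l.length)) :
    l.foldr max 0 = l.length := by
  have h1 : l.foldr max 0 ∈ l := foldr_max_mem l h
  have h2 := (hp.mem_iff).mp h1
  rw [List.mem_range'_1] at h2
  have h3 : l.length ∈ l := by
    refine hp.mem_iff.mpr ?_
    rw [List.mem_range'_1]
    have : l.length ≠ 0 := by simpa using h
    omega
  have h4 := le_foldr_max l _ h3
  omega

lemma decomp (l : List ℕ) (m : ℕ) (hm : m ∈ l) :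
    l = l.takeWhile (· ≠ m) ++ m :: (l.dropWhile (· ≠ m)).tail := by
  have hd : l.dropWhile (· ≠ m) ≠ [] := by
    intro h
    rw [List.dropWhile_eq_nil_iff] at h
    have := h m hm; simp at this
  have hh : (l.dropWhile (· ≠ m)).head hd = m := by
    have := List.head_dropWhile_not (· ≠ m) hd
    simpa using this
  have key : l.dropWhile (· ≠ m) = m :: (l.dropWhile (· ≠ m)).tail := by
    conv_lhs => rw [← List.cons_head_tail hd, hh]
  conv_lhs => rw [← List.takeWhile_append_dropWhile (p := (· ≠ m)) (l := l), key]

lemma mem_takeWhile_ne (l : List ℕ) (m a : ℕ) (h : a ∈ l.takeWhile (· ≠ m)) : a ≠ m := by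
  have := List.mem_takeWhile_imp h
  simpa using this

lemma decomp_length (l : List ℕ) (m : ℕ) (hm : m ∈ l) :
    (l.takeWhile (· ≠ m)).length + (l.dropWhile (· ≠ m)).tail.length + 1 = l.length := by
  conv_rhs => rw [decomp l m hm]
  simp only [List.length_append, List.length_cons]
  omega

lemma ppermAux_cons (f : ℕ) (x : ℕ) (xs : List ℕ) :
    PpermAux (f+1) (x::xs) =
      (PpermAux f ((x::xs).takeWhile (· ≠ (x::xs).foldr max 0))).map
        (· + ((x::xs).dropWhile (· ≠ (x::xs).foldr max 0)).tail.length) ++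
      [(x::xs).foldr max 0] ++
      PpermAux f ((((x::xs).dropWhile (· ≠ (x::xs).foldr max 0)).tail).map
        (· - ((x::xs).takeWhile (· ≠ (x::xs).foldr max 0)).length)) := rfl

lemma ppermAux_congr : ∀ f1 : ℕ, ∀ f2 (l : List ℕ), l.length ≤ f1 → l.length ≤ f2 →
    PpermAux f1 l = PpermAux f2 l := by
  intro f1
  induction f1 with
  | zero =>
    intro f2 l h1 h2
    have : l = [] := by cases l <;> simp_all
    subst this
    cases f2 <;> rfl
  | succ f ih =>
    intro f2 l h1 h2
    match l, f2 with
    | [], f2 => cases f2 <;> rfl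
    | x :: xs, 0 => simp at h2
    | x :: xs, g+1 =>
      have hm : ((x::xs).foldr max 0) ∈ x::xs := foldr_max_mem _ (by simp)
      have hlen := decomp_length (x::xs) _ hm
      simp only [List.length_cons] at h1 h2 hlen
      rw [ppermAux_cons, ppermAux_cons]
      rw [ih g _ (by omega) (by omega),
          ih g _ (by rw [List.length_map]; omega) (by rw [List.length_map]; omega)]

lemma pperm_cons (x : ℕ) (xs : List ℕ) :
    Pperm (x :: xs) =
      (Pperm ((x::xs).takeWhile (· ≠ (x::xs).foldr max 0))).map
        (· + ((x::xs).dropWhile (· ≠ (x::xs).foldr max 0)).tail.length) ++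
      [(x::xs).foldr max 0] ++
      Pperm ((((x::xs).dropWhile (· ≠ (x::xs).foldr max 0)).tail).map
        (· - ((x::xs).takeWhile (· ≠ (x::xs).foldr max 0)).length)) := by
  have hm : ((x::xs).foldr max 0) ∈ x::xs := foldr_max_mem _ (by simp)
  have hlen := decomp_length (x::xs) _ hm
  simp only [List.length_cons] at hlen
  show PpermAux (x::xs).length (x::xs) = _
  have hx : (x::xs).length = xs.length + 1 := rfl
  rw [hx, ppermAux_cons, Pperm, Pperm,
      ppermAux_congr xs.length _ _ (by omega) (le_refl _),
      ppermAux_congr xs.length _ _ (by rw [List.length_map]; omega)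
        (by rw [List.length_map])]
  rw [List.length_map]

lemma getD_map (l : List ℕ) (f : ℕ → ℕ) (i : ℕ) (h : i < l.length) :
    (l.map f).getD i 0 = f (l.getD i 0) := by
  simp [List.getD_eq_getElem?_getD, List.getElem?_map, List.getElem?_eq_getElem, h]

lemma getD_mem (l : List ℕ) (i : ℕ) (h : i < l.length) : l.getD i 0 ∈ l := by
  rw [List.getD_eq_getElem _ _ h]
  exact List.getElem_mem h

lemma getD_middle (u v : List ℕ) (n : ℕ) :
    (u ++ n :: v).getD u.length 0 = n := by
  rw [List.getD_append_right _ _ _ _ (le_refl _)]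
  simp

lemma getD_right (u v : List ℕ) (n i : ℕ) (h : u.length < i) :
    (u ++ n :: v).getD i 0 = v.getD (i - u.length - 1) 0 := by
  rw [List.getD_append_right _ _ _ _ (by omega)]
  have : i - u.length = (i - u.length - 1) + 1 := by omega
  rw [this]
  simp

lemma avoids_prefix (u w : List ℕ) (h : Avoids231 (u ++ w)) : Avoids231 u := by
  rintro ⟨i, j, k, hij, hjk, hk, h1, h2⟩
  exact h ⟨i, j, k, hij, hjk, by simp only [List.length_append]; omega,
    by rwa [List.getD_append _ _ _ _ (by omega), List.getD_append _ _ _ _ (by omega)],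
    by rwa [List.getD_append _ _ _ _ (by omega), List.getD_append _ _ _ _ (by omega)]⟩

lemma avoids_suffix (u v : List ℕ) (n : ℕ) (h : Avoids231 (u ++ n :: v)) : Avoids231 v := by
  rintro ⟨i, j, k, hij, hjk, hk, h1, h2⟩
  refine h ⟨u.length + 1 + i, u.length + 1 + j, u.length + 1 + k, by omega, by omega,
    by simp only [List.length_append, List.length_cons]; omega, ?_, ?_⟩ <;>
  · rw [getD_right _ _ _ _ (by omega), getD_right _ _ _ _ (by omega)]
    have e : ∀ a : ℕ, u.length + 1 + a - u.length - 1 = a := fun a => by omega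
    rw [e, e]
    assumption

lemma avoids_map (l : List ℕ) (f : ℕ → ℕ)
    (hf : ∀ x ∈ l, ∀ y ∈ l, (f x < f y ↔ x < y)) (h : Avoids231 l) :
    Avoids231 (l.map f) := by
  rintro ⟨i, j, k, hij, hjk, hk, h1, h2⟩
  rw [List.length_map] at hk
  rw [getD_map _ _ _ (by omega), getD_map _ _ _ (by omega)] at h1
  rw [getD_map _ _ _ (by omega), getD_map _ _ _ (by omega)] at h2
  rw [hf _ (getD_mem _ _ (by omega)) _ (getD_mem _ _ (by omega))] at h1
  rw [hf _ (getD_mem _ _ (by omega)) _ (getD_mem _ _ (by omega))] at h2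
  exact h ⟨i, j, k, hij, hjk, hk, h1, h2⟩

lemma split_facts (u v : List ℕ) (n : ℕ) (hn : n = u.length + v.length + 1)
    (hp : (u ++ n :: v).Perm (List.range' 1 n))
    (hav : Avoids231 (u ++ n :: v)) :
    (∀ b ∈ v, u.length < b ∧ b < n) ∧ u.Perm (List.range' 1 u.length) ∧
      v.Perm (List.range' (u.length + 1) v.length) := by
  have hnd : (u ++ n :: v).Nodup := hp.nodup_iff.mpr (List.nodup_range' (s := 1) (n := n))
  rw [List.nodup_append] at hnd
  obtain ⟨hndu, hndnv, hdisj⟩ := hnd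
  rw [List.nodup_cons] at hndnv
  obtain ⟨hnv, hndv⟩ := hndnv
  have hnu : n ∉ u := fun h => hdisj n h n (by simp) rfl
  have hmem : ∀ a ∈ u ++ n :: v, 1 ≤ a ∧ a ≤ n := by
    intro a ha
    have := hp.mem_iff.mp ha
    rw [List.mem_range'_1] at this
    omega
  have hult : ∀ a ∈ u, a < n := by
    intro a ha
    have h1 := hmem a (by simp [ha])
    have : a ≠ n := fun h => hnu (h ▸ ha)
    omega
  have hvlt : ∀ b ∈ v, b < n := by
    intro b hb
    have h1 := hmem b (by simp [hb])
    have : b ≠ n := fun h => hnv (h ▸ hb)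
    omega
  have key : ∀ a ∈ u, ∀ b ∈ v, a ≤ b := by
    intro a ha b hb
    by_contra hab
    push_neg at hab
    obtain ⟨i, hi, hia⟩ := List.mem_iff_getElem.mp ha
    obtain ⟨k, hk, hkb⟩ := List.mem_iff_getElem.mp hb
    refine hav ⟨i, u.length, u.length + 1 + k, by omega, by omega,
      by simp only [List.length_append, List.length_cons]; omega, ?_, ?_⟩
    · rw [getD_right _ _ _ _ (by omega), List.getD_append _ _ _ _ (by omega),
        List.getD_eq_getElem _ _ hi, hia]
      have e : u.length + 1 + k - u.length - 1 = k := by omega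
      rw [e, List.getD_eq_getElem _ _ hk, hkb]
      exact hab
    · rw [List.getD_append _ _ _ _ (by omega), getD_middle,
        List.getD_eq_getElem _ _ hi, hia]
      exact hult a ha
  have husmall : ∀ a ∈ u, a ≤ u.length := by
    intro a ha
    by_contra hbig
    push_neg at hbig
    have hsub : ∀ x : ℕ, 1 ≤ x → x ≤ a → x ∈ u := by
      intro x h1 h2
      have han := hult a ha
      have : x ∈ u ++ n :: v := by
        refine hp.mem_iff.mpr ?_
        rw [List.mem_range'_1]
        omega
      rcases List.mem_append.mp this with h | h
      · exact h
      · rcases List.mem_cons.mp h with rfl | h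
        · omega
        · have := key a ha x h
          have hxa : x = a := by omega
          subst hxa
          exact (hdisj x ha x (List.mem_cons_of_mem n h) rfl).elim
    have hss : Finset.Icc 1 a ⊆ u.toFinset := by
      intro x hx
      rw [Finset.mem_Icc] at hx
      rw [List.mem_toFinset]
      exact hsub x hx.1 hx.2
    have hcard := Finset.card_le_card hss
    rw [Nat.card_Icc, List.toFinset_card_of_nodup hndu] at hcard
    omega
  have huperm : u.Perm (List.range' 1 u.length) := by
    refine List.perm_of_nodup_nodup_toFinset_eq hndu (List.nodup_range' (s := 1) (n := u.length)) ?_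
    refine Finset.eq_of_subset_of_card_le ?_ ?_
    · intro x hx
      rw [List.mem_toFinset] at hx ⊢
      rw [List.mem_range'_1]
      have := hmem x (by simp [hx])
      have := husmall x hx
      omega
    · rw [List.toFinset_card_of_nodup hndu,
        List.toFinset_card_of_nodup (List.nodup_range' (s := 1) (n := u.length)), List.length_range']
  have hvbig : ∀ b ∈ v, u.length < b := by
    intro b hb
    by_contra hsm
    push_neg at hsm
    have h1 := hmem b (by simp [hb])
    have : b ∈ u.toFinset := by
      rw [huperm.mem_iff.symm.symm] at *
      rw [List.mem_toFinset]
      refine huperm.mem_iff.mpr ?_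
      rw [List.mem_range'_1]
      omega
    rw [List.mem_toFinset] at this
    exact hdisj b this b (List.mem_cons_of_mem n hb) rfl
  refine ⟨fun b hb => ⟨hvbig b hb, hvlt b hb⟩, huperm, ?_⟩
  refine List.perm_of_nodup_nodup_toFinset_eq hndv List.nodup_range' ?_
  refine Finset.eq_of_subset_of_card_le ?_ ?_
  · intro x hx
    rw [List.mem_toFinset] at hx ⊢
    rw [List.mem_range'_1]
    have := hvbig x hx
    have := hvlt x hx
    omega
  · rw [List.toFinset_card_of_nodup hndv,
      List.toFinset_card_of_nodup List.nodup_range', List.length_range']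

lemma range_shuffle (a b : ℕ) :
    (List.range' (b+1) a ++ (a+b+1) :: List.range' 1 b).Perm (List.range' 1 (a+b+1)) := by
  have h1 : List.range' 1 b ++ List.range' (b+1) a = List.range' 1 (a+b) := by
    have := List.range'_append (s := 1) (m := b) (n := a) (step := 1)
    simp only [one_mul] at this
    rw [Nat.add_comm 1 b] at this
    rwa [Nat.add_comm b a] at this
  have h2 : List.range' 1 (a+b) ++ [1+(a+b)] = List.range' 1 (1+(a+b)) := by
    have := List.range'_append (s := 1) (m := a+b) (n := 1) (step := 1)
    simpa only [one_mul, List.range'_one, Nat.add_comm 1 (a+b)] using this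
  have e1 : List.range' (b+1) a ++ (a+b+1) :: List.range' 1 b
      = (List.range' (b+1) a ++ [a+b+1]) ++ List.range' 1 b := by simp
  have e2 : List.range' 1 b ++ (List.range' (b+1) a ++ [a+b+1])
      = List.range' 1 (a+b+1) := by
    rw [← List.append_assoc, h1, show a+b+1 = 1+(a+b) from by omega, h2]
  rw [e1, ← e2]
  exact List.perm_append_comm

lemma map_add_range (a n c : ℕ) :
    (List.range' a n).map (· + c) = List.range' (a+c) n := by
  have := List.map_add_range' (a := c) a n 1
  rw [Nat.add_comm c a] at this
  rw [← this]
  apply List.map_congr_left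
  intro x _
  omega

lemma pperm_perm : ∀ n : ℕ, ∀ l : List ℕ, l.length = n → l.Perm (List.range' 1 n) →
    Avoids231 l → (Pperm l).Perm (List.range' 1 n) := by
  intro n
  induction n using Nat.strong_induction_on with
  | _ n ih =>
    intro l hlen hp hav
    match l with
    | [] =>
      simp only [List.length_nil] at hlen
      subst hlen
      simp [Pperm, PpermAux]
    | x :: xs =>
      have hmm : ((x::xs).foldr max 0) ∈ x::xs := foldr_max_mem _ (by simp)
      have hmn : (x::xs).foldr max 0 = n := by
        rw [foldr_max_eq _ (by simp) (by rw [hlen]; exact hp)]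
        exact hlen
      set u := (x::xs).takeWhile (· ≠ (x::xs).foldr max 0) with hu
      set v := ((x::xs).dropWhile (· ≠ (x::xs).foldr max 0)).tail with hv
      have hsplit : x::xs = u ++ n :: v := by
        rw [← hmn]
        exact decomp _ _ hmm
      have hlen2 : u.length + v.length + 1 = n := by
        rw [← hlen, ← decomp_length (x::xs) _ hmm]
      obtain ⟨hvb, hupm, hvpm⟩ :=
        split_facts u v n (by omega) (hsplit ▸ hp) (hsplit ▸ hav)
      have havu : Avoids231 u := avoids_prefix u (n::v) (hsplit ▸ hav)
      have havv : Avoids231 v := avoids_suffix u v n (hsplit ▸ hav)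
      have hv'pm : (v.map (· - u.length)).Perm (List.range' 1 v.length) := by
        have := hvpm.map (· - u.length)
        rwa [List.map_sub_range' (a := u.length) (s := u.length + 1) (by omega) _, Nat.add_sub_cancel_left] at this
      have havv' : Avoids231 (v.map (· - u.length)) := by
        refine avoids_map v _ ?_ havv
        intro a ha b hb
        have h1 := hvb a ha
        have h2 := hvb b hb
        omega
      have ihu := ih u.length (by omega) u rfl hupm havu
      have ihv' := ih v.length (by omega) (v.map (· - u.length))
        (by rw [List.length_map]) hv'pm havv'
      rw [pperm_cons, ← hu, ← hv, hmn]
      have s1 : ((Pperm u).map (· + v.length)).Perm (List.range' (v.length+1) u.length) := by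
        have := ihu.map (· + v.length)
        rwa [map_add_range, Nat.add_comm 1 v.length] at this
      have s2 : ((Pperm u).map (· + v.length) ++ [n] ++ Pperm (v.map (· - u.length))).Perm
          (List.range' (v.length+1) u.length ++ n :: List.range' 1 v.length) := by
        rw [List.append_assoc, List.singleton_append]
        exact List.Perm.append s1 (ihv'.cons n)
      refine s2.trans ?_
      have := range_shuffle u.length v.length
      rwa [show u.length + v.length + 1 = n from hlen2] at this

lemma pperm_length (l : List ℕ) (hp : l.Perm (List.range' 1 l.length))
    (hav : Avoids231 l) : (Pperm l).length = l.length := by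
  have := (pperm_perm l.length l rfl hp hav).length_eq
  rwa [List.length_range'] at this

lemma LRmax_split (u v : List ℕ) (n : ℕ) (hu : ∀ x ∈ u, x < n) (hv : ∀ x ∈ v, x < n)
    (i : ℕ) : LRmaxPos (u ++ n :: v) i ↔ (LRmaxPos u i ∨ i = u.length) := by
  constructor
  · rintro ⟨hi, hm⟩
    simp only [List.length_append, List.length_cons] at hi
    rcases lt_trichotomy i u.length with h | h | h
    · left
      refine ⟨h, fun j hj => ?_⟩
      have := hm j hj
      rwa [List.getD_append _ _ _ _ (by omega), List.getD_append _ _ _ _ (by omega)] at this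
    · right; exact h
    · exfalso
      have h1 := hm u.length h
      rw [getD_middle] at h1
      have h2 : (u ++ n :: v).getD i 0 ∈ v := by
        rw [getD_right _ _ _ _ h]
        exact getD_mem _ _ (by omega)
      have := hv _ h2
      omega
  · rintro (⟨hi, hm⟩ | rfl)
    · refine ⟨by simp only [List.length_append, List.length_cons]; omega, fun j hj => ?_⟩
      rw [List.getD_append _ _ _ _ (by omega), List.getD_append _ _ _ _ (by omega)]
      exact hm j hj
    · refine ⟨by simp only [List.length_append, List.length_cons]; omega, fun j hj => ?_⟩
      rw [getD_middle, List.getD_append _ _ _ _ (by omega)]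
      exact hu _ (getD_mem _ _ (by omega))

lemma RLmax_split (u v : List ℕ) (n : ℕ) (hu : ∀ x ∈ u, x < n) (hv : ∀ x ∈ v, x < n)
    (i : ℕ) : RLmaxPos (u ++ n :: v) i ↔
      (i = u.length ∨ (u.length < i ∧ RLmaxPos v (i - u.length - 1))) := by
  have hL : (u ++ n :: v).length = u.length + 1 + v.length := by
    simp only [List.length_append, List.length_cons]; omega
  constructor
  · rintro ⟨hi, hm⟩
    rw [hL] at hi
    rcases lt_trichotomy i u.length with h | h | h
    · exfalso
      have h1 := hm u.length h (by omega)
      rw [getD_middle, List.getD_append _ _ _ _ (by omega)] at h1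
      have := hu _ (getD_mem _ _ (by omega) : u.getD i 0 ∈ u)
      omega
    · left; exact h
    · right
      refine ⟨h, by omega, fun j hj1 hj2 => ?_⟩
      have h1 := hm (u.length + 1 + j) (by omega) (by omega)
      rw [getD_right _ _ _ _ (by omega), getD_right _ _ _ _ (by omega)] at h1
      have e : u.length + 1 + j - u.length - 1 = j := by omega
      rwa [e] at h1
  · rintro (rfl | ⟨h, hlt, hm⟩)
    · refine ⟨by omega, fun j hj1 hj2 => ?_⟩
      rw [getD_middle, getD_right _ _ _ _ hj1]
      rw [hL] at hj2
      exact hv _ (getD_mem _ _ (by omega))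
    · refine ⟨by omega, fun j hj1 hj2 => ?_⟩
      rw [hL] at hj2
      rw [getD_right _ _ _ _ (by omega), getD_right _ _ _ _ (by omega)]
      exact hm (j - u.length - 1) (by omega) (by omega)

lemma LRmax_map (l : List ℕ) (f : ℕ → ℕ)
    (hf : ∀ x ∈ l, ∀ y ∈ l, (f x < f y ↔ x < y)) (i : ℕ) :
    LRmaxPos (l.map f) i ↔ LRmaxPos l i := by
  unfold LRmaxPos
  rw [List.length_map]
  constructor
  · rintro ⟨hi, hm⟩
    refine ⟨hi, fun j hj => ?_⟩
    have := hm j hj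
    rw [getD_map _ _ _ (by omega), getD_map _ _ _ hi] at this
    rwa [hf _ (getD_mem _ _ (by omega)) _ (getD_mem _ _ hi)] at this
  · rintro ⟨hi, hm⟩
    refine ⟨hi, fun j hj => ?_⟩
    rw [getD_map _ _ _ (by omega), getD_map _ _ _ hi,
      hf _ (getD_mem _ _ (by omega)) _ (getD_mem _ _ hi)]
    exact hm j hj

lemma RLmax_map (l : List ℕ) (f : ℕ → ℕ)
    (hf : ∀ x ∈ l, ∀ y ∈ l, (f x < f y ↔ x < y)) (i : ℕ) :
    RLmaxPos (l.map f) i ↔ RLmaxPos l i := by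
  unfold RLmaxPos
  rw [List.length_map]
  constructor
  · rintro ⟨hi, hm⟩
    refine ⟨hi, fun j hj1 hj2 => ?_⟩
    have := hm j hj1 hj2
    rw [getD_map _ _ _ (by omega), getD_map _ _ _ hi] at this
    rwa [hf _ (getD_mem _ _ (by omega)) _ (getD_mem _ _ hi)] at this
  · rintro ⟨hi, hm⟩
    refine ⟨hi, fun j hj1 hj2 => ?_⟩
    rw [getD_map _ _ _ (by omega), getD_map _ _ _ hi,
      hf _ (getD_mem _ _ (by omega)) _ (getD_mem _ _ hi)]
    exact hm j hj1 hj2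

theorem main_aux : ∀ n : ℕ, ∀ π : List ℕ, π.length = n → π.Perm (List.range' 1 n) →
    Avoids231 π → ∀ i : ℕ,
    (LRmaxPos π i ↔ LRmaxPos (Pperm π) i) ∧ (RLmaxPos π i ↔ RLmaxPos (Pperm π) i) := by
  intro n
  induction n using Nat.strong_induction_on with
  | _ n ih =>
    intro π hlen hp hav i
    match π with
    | [] => rw [show Pperm [] = [] from rfl]; exact ⟨Iff.rfl, Iff.rfl⟩
    | x :: xs =>
      have hmm : ((x::xs).foldr max 0) ∈ x::xs := foldr_max_mem _ (by simp)
      have hmn : (x::xs).foldr max 0 = n := by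
        rw [foldr_max_eq _ (by simp) (by rw [hlen]; exact hp)]
        exact hlen
      set u := (x::xs).takeWhile (· ≠ (x::xs).foldr max 0) with hu
      set v := ((x::xs).dropWhile (· ≠ (x::xs).foldr max 0)).tail with hv
      have hsplit : x::xs = u ++ n :: v := by
        rw [← hmn]
        exact decomp _ _ hmm
      have hlen2 : u.length + v.length + 1 = n := by
        rw [← hlen, ← decomp_length (x::xs) _ hmm]
      obtain ⟨hvb, hupm, hvpm⟩ :=
        split_facts u v n (by omega) (hsplit ▸ hp) (hsplit ▸ hav)
      have havu : Avoids231 u := avoids_prefix u (n::v) (hsplit ▸ hav)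
      have havv : Avoids231 v := avoids_suffix u v n (hsplit ▸ hav)
      have hv'pm : (v.map (· - u.length)).Perm (List.range' 1 v.length) := by
        have := hvpm.map (· - u.length)
        rwa [List.map_sub_range' (a := u.length) (s := u.length + 1) (by omega) _, Nat.add_sub_cancel_left] at this
      have havv' : Avoids231 (v.map (· - u.length)) := by
        refine avoids_map v _ ?_ havv
        intro a ha b hb
        have h1 := hvb a ha
        have h2 := hvb b hb
        omega
      have ihu := ih u.length (by omega) u rfl hupm havu
      have ihv' := ih v.length (by omega) (v.map (· - u.length))
        (by rw [List.length_map]) hv'pm havv'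
      have hPu := pperm_perm u.length u rfl hupm havu
      have hPv' := pperm_perm v.length (v.map (· - u.length))
        (by rw [List.length_map]) hv'pm havv'
      have hP : Pperm (x::xs) =
          (Pperm u).map (· + v.length) ++ n ::
            Pperm (v.map (· - u.length)) := by
        rw [pperm_cons, ← hu, ← hv, hmn, List.append_assoc, List.singleton_append]
      have hAlen : ((Pperm u).map (· + v.length)).length = u.length := by
        rw [List.length_map, hPu.length_eq, List.length_range']
      have huval : ∀ a ∈ u, a < n := by
        intro a ha
        have := hupm.mem_iff.mp ha
        rw [List.mem_range'_1] at this
        omega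
      have hvval : ∀ b ∈ v, b < n := fun b hb => (hvb b hb).2
      have hAval : ∀ y ∈ (Pperm u).map (· + v.length), y < n := by
        intro y hy
        rw [List.mem_map] at hy
        obtain ⟨z, hz, rfl⟩ := hy
        have := hPu.mem_iff.mp hz
        rw [List.mem_range'_1] at this
        omega
      have hBval : ∀ y ∈ Pperm (v.map (· - u.length)), y < n := by
        intro y hy
        have := hPv'.mem_iff.mp hy
        rw [List.mem_range'_1] at this
        omega
      rw [hP, hsplit]
      constructor
      · rw [LRmax_split u v n huval hvval i,
          LRmax_split _ _ n hAval hBval i, hAlen]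
        have h1 : LRmaxPos u i ↔ LRmaxPos ((Pperm u).map (· + v.length)) i := by
          rw [(ihu i).1]
          exact (LRmax_map (Pperm u) (· + v.length) (fun a _ b _ => by show a + v.length < b + v.length ↔ a < b; omega) i).symm
        rw [h1]
      · rw [RLmax_split u v n huval hvval i,
          RLmax_split _ _ n hAval hBval i, hAlen]
        have h2 : RLmaxPos v (i - u.length - 1) ↔
            RLmaxPos (Pperm (v.map (· - u.length))) (i - u.length - 1) := by
          refine Iff.trans ?_ ((ihv' (i - u.length - 1)).2)
          exact (RLmax_map v (· - u.length)
            (fun a ha b hb => by show a - u.length < b - u.length ↔ a < b; have := hvb a ha; have := hvb b hb; omega) _).symm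
        rw [h2]

end PP12

/-- `P` preserves the positions of left-to-right and of
right-to-left maxima. -/
theorem Pperm_preserves_maxima_positions :
    ∀ π : List ℕ, π.Perm (List.range' 1 π.length) → Avoids231 π →
      ∀ i : ℕ,
        (LRmaxPos π i ↔ LRmaxPos (Pperm π) i) ∧
        (RLmaxPos π i ↔ RLmaxPos (Pperm π) i) := by
  intro π hp hav i
  exact PP12.main_aux π.length π rfl hp hav i
end

section
/- Let A be any composition of the operators S (stack sort) and R (reversal), let τ be a permutation, and suppose x, y are values of τ such that no value larger than max(x,y) occurs between x and y in τ. Then no value larger than max(x,y) occurs between x and y in A(τ). -/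
namespace SLB

local infixl:50 " <+ " => List.Sublist

lemma mem_foldr_max : ∀ {l : List ℕ}, l ≠ [] → l.foldr max 0 ∈ l := by
  intro l h
  induction l with
  | nil => simp at h
  | cons x t ih =>
    rcases eq_or_ne t [] with rfl | ht
    · simp
    · simp only [List.foldr_cons]
      rcases max_cases x (t.foldr max 0) with ⟨h1, _⟩ | ⟨h1, _⟩ <;>
        simp [h1, ih ht]

lemma le_foldr_max : ∀ {l : List ℕ} {a : ℕ}, a ∈ l → a ≤ l.foldr max 0 := by
  intro l
  induction l with
  | nil => simp
  | cons x t ih =>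
    intro a h
    simp only [List.foldr_cons]
    rcases List.mem_cons.mp h with rfl | h
    · exact le_max_left _ _
    · exact le_trans (ih h) (le_max_right _ _)

lemma decomp {l : List ℕ} (h : l ≠ []) :
    l = l.takeWhile (· ≠ l.foldr max 0) ++
        l.foldr max 0 :: (l.dropWhile (· ≠ l.foldr max 0)).tail := by
  set M := l.foldr max 0 with hM
  have hMl : M ∈ l := mem_foldr_max h
  have hne : l.dropWhile (· ≠ M) ≠ [] := by
    intro hc
    have := (List.dropWhile_eq_nil_iff).mp hc M hMl
    simp at this
  have hhead : (l.dropWhile (· ≠ M)).head hne = M := by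
    have := List.head_dropWhile_not (· ≠ M) hne
    simpa using this
  have hcons : l.dropWhile (· ≠ M) = M :: (l.dropWhile (· ≠ M)).tail := by
    conv_lhs => rw [← List.cons_head_tail hne]
    rw [hhead]
  conv_lhs => rw [← List.takeWhile_append_dropWhile (p := (· ≠ M)) (l := l), hcons]

lemma stackSortAux_nil (f : ℕ) : stackSortAux f [] = [] := by cases f <;> rfl

lemma length_parts {l : List ℕ} (h : l ≠ []) :
    (l.takeWhile (· ≠ l.foldr max 0)).length + 1 +
      ((l.dropWhile (· ≠ l.foldr max 0)).tail).length = l.length := by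
  conv_rhs => rw [decomp h]
  simp [List.length_append]
  omega

lemma aux_eq : ∀ (f₁ f₂ : ℕ) (l : List ℕ), l.length ≤ f₁ → l.length ≤ f₂ →
    stackSortAux f₁ l = stackSortAux f₂ l := by
  intro f₁
  induction f₁ with
  | zero =>
    intro f₂ l h1 _
    rw [List.length_eq_zero_iff.mp (Nat.le_zero.mp h1)]
    simp [stackSortAux_nil]
  | succ n ih =>
    intro f₂ l h1 h2
    rcases l with _ | ⟨x, xs⟩
    · simp [stackSortAux_nil]
    rcases f₂ with _ | f₂
    · simp at h2
    have hlen := length_parts (l := x :: xs) (by simp)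
    simp only [stackSortAux]
    simp only [List.length_cons] at h1 h2 hlen
    congr 2
    · exact ih f₂ _ (by omega) (by omega)
    · exact ih f₂ _ (by omega) (by omega)

lemma stackSort_eq {l : List ℕ} (h : l ≠ []) :
    stackSort l = stackSort (l.takeWhile (· ≠ l.foldr max 0)) ++
      stackSort ((l.dropWhile (· ≠ l.foldr max 0)).tail) ++ [l.foldr max 0] := by
  rcases l with _ | ⟨x, xs⟩
  · simp at h
  have hlen := length_parts (l := x :: xs) (by simp)
  simp only [List.length_cons] at hlen
  show stackSortAux (x :: xs).length (x :: xs) = _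
  simp only [List.length_cons, stackSortAux, stackSort]
  congr 2
  · exact aux_eq xs.length _ _ (by omega) le_rfl
  · exact aux_eq xs.length _ _ (by omega) le_rfl

lemma mem_stackSort_subset : ∀ (n : ℕ) (l : List ℕ), l.length ≤ n →
    ∀ z ∈ stackSort l, z ∈ l := by
  intro n
  induction n with
  | zero =>
    intro l h z hz
    rw [List.length_eq_zero_iff.mp (Nat.le_zero.mp h)] at hz
    simpa [stackSort, stackSortAux_nil] using hz
  | succ n ih =>
    intro l h z hz
    rcases eq_or_ne l [] with rfl | hne
    · simpa [stackSort, stackSortAux_nil] using hz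
    rw [stackSort_eq hne] at hz
    have hlen := length_parts hne
    have hd := decomp hne
    simp only [List.mem_append, List.mem_singleton] at hz
    rcases hz with (hz | hz) | rfl
    · have := ih _ (by omega) z hz
      rw [hd]; exact List.mem_append.mpr (Or.inl this)
    · have := ih _ (by omega) z hz
      rw [hd]; exact List.mem_append.mpr (Or.inr (List.mem_cons_of_mem _ this))
    · exact mem_foldr_max hne

private def trif (i j k L : ℕ) : ℕ → ℕ
  | 0 => i
  | 1 => j
  | 2 => k
  | (t + 3) => t + 3 + L

lemma triple_sublist {l : List ℕ} {i j k : ℕ} (hij : i < j) (hjk : j < k)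
    (hk : k < l.length) :
    [l.getD i 0, l.getD j 0, l.getD k 0] <+ l := by
  rw [List.sublist_iff_exists_orderEmbedding_getElem?_eq]
  refine ⟨OrderEmbedding.ofStrictMono (trif i j k l.length) ?_, ?_⟩
  · apply strictMono_nat_of_lt_succ
    intro t
    rcases t with _ | _ | _ | t <;> simp [trif] <;> omega
  · intro ix
    have hg : ∀ m, m < l.length → l[m]? = some (l.getD m 0) := by
      intro m hm
      rw [List.getElem?_eq_getElem hm,
        List.getD_eq_getElem l 0 hm]
    rcases ix with _ | _ | _ | ix
    · simpa [trif, OrderEmbedding.ofStrictMono] using (hg i (by omega)).symm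
    · simpa [trif, OrderEmbedding.ofStrictMono] using (hg j (by omega)).symm
    · simpa [trif, OrderEmbedding.ofStrictMono] using (hg k (by omega)).symm
    · have : l[ix + 3 + l.length]? = none := by
        rw [List.getElem?_eq_none] <;> omega
      simpa [trif, OrderEmbedding.ofStrictMono] using this.symm

lemma sublist_triple {l : List ℕ} {a z b : ℕ} (h : [a, z, b] <+ l) :
    ∃ i j k, i < j ∧ j < k ∧ k < l.length ∧
      l.getD i 0 = a ∧ l.getD j 0 = z ∧ l.getD k 0 = b := by
  rw [List.sublist_iff_exists_fin_orderEmbedding_get_eq] at h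
  obtain ⟨f, hf⟩ := h
  have hget : ∀ (ix : Fin ([a, z, b].length)),
      l.getD (f ix) 0 = [a, z, b].get ix := by
    intro ix
    rw [List.getD_eq_getElem l 0 (f ix).isLt, hf ix]
    rfl
  refine ⟨f ⟨0, by norm_num⟩, f ⟨1, by norm_num⟩, f ⟨2, by norm_num⟩,
    ?_, ?_, (f ⟨2, by norm_num⟩).isLt, hget ⟨0, by norm_num⟩,
    hget ⟨1, by norm_num⟩, hget ⟨2, by norm_num⟩⟩
  · exact f.lt_iff_lt.mpr (by norm_num [Fin.lt_def])
  · exact f.lt_iff_lt.mpr (by norm_num [Fin.lt_def])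

lemma key : ∀ (n : ℕ) (a b : ℕ) (l : List ℕ), l.length ≤ n →
    (∀ z, max a b < z → ¬ [a, z, b] <+ l) →
    ∀ z, max a b < z → ¬ [a, z, b] <+ stackSort l := by
  intro n
  induction n with
  | zero =>
    intro a b l h _ z _ hs
    rw [List.length_eq_zero_iff.mp (Nat.le_zero.mp h)] at hs
    simp [stackSort, stackSortAux_nil] at hs
  | succ n ih =>
    intro a b l hlen hyp z hz hs
    rcases eq_or_ne l [] with rfl | hne
    · simp [stackSort, stackSortAux_nil] at hs
    set M := l.foldr max 0 with hMdef
    set α := l.takeWhile (· ≠ M) with hαdef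
    set β := (l.dropWhile (· ≠ M)).tail with hβdef
    have hd : l = α ++ M :: β := decomp hne
    have hl : α.length + 1 + β.length = l.length := length_parts hne
    have hαl : α <+ l := by rw [hd]; exact List.sublist_append_left _ _
    have hβl : β <+ l := by
      rw [hd]
      exact ((List.sublist_cons_self M β).trans (List.sublist_append_right α (M :: β)))
    rw [stackSort_eq hne] at hs
    by_cases hM : max a b < M
    · rw [List.sublist_append_iff] at hs
      obtain ⟨u, v, huv, hu, hv⟩ := hs
      rcases List.sublist_singleton.mp hv with rfl | rfl
      · -- v = [], u = [a,z,b] <+ stackSort α ++ stackSort β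
        rw [List.append_nil] at huv
        subst huv
        rw [List.sublist_append_iff] at hu
        obtain ⟨p, q, hpq, hp, hq⟩ := hu
        rcases p with _ | ⟨p1, _ | ⟨p2, _ | ⟨p3, _ | ⟨p4, p⟩⟩⟩⟩
        · -- all in stackSort β
          simp only [List.nil_append] at hpq
          subst hpq
          exact ih a b β (by omega)
            (fun w hw hws => hyp w hw (hws.trans hβl)) z hz hq
        · -- p = [a], q = [z,b]
          simp only [List.cons_append, List.nil_append, List.cons.injEq] at hpq
          obtain ⟨rfl, hq'⟩ := hpq
          subst hq'
          have ha : a ∈ α := mem_stackSort_subset (n+1) α (by omega) a (hp.subset (by simp))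
          have hb : b ∈ β := mem_stackSort_subset (n+1) β (by omega) b (hq.subset (by simp))
          refine hyp M hM ?_
          rw [hd]
          exact List.Sublist.append (List.singleton_sublist.mpr ha)
            (List.Sublist.cons₂ M (List.singleton_sublist.mpr hb))
        · -- p = [a,z], q = [b]
          simp only [List.cons_append, List.nil_append, List.cons.injEq] at hpq
          obtain ⟨rfl, rfl, hq'⟩ := hpq
          subst hq'
          have ha : a ∈ α := mem_stackSort_subset (n+1) α (by omega) a (hp.subset (by simp))
          have hb : b ∈ β := mem_stackSort_subset (n+1) β (by omega) b (hq.subset (by simp))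
          refine hyp M hM ?_
          rw [hd]
          exact List.Sublist.append (List.singleton_sublist.mpr ha)
            (List.Sublist.cons₂ M (List.singleton_sublist.mpr hb))
        · -- p = [a,z,b], q = []
          simp only [List.cons_append, List.nil_append, List.cons.injEq] at hpq
          obtain ⟨rfl, rfl, rfl, hq'⟩ := hpq
          exact ih a b α (by omega)
            (fun w hw hws => hyp w hw (hws.trans hαl)) z hz hp
        · -- p too long
          exfalso
          have := congrArg List.length hpq
          simp at this
          all_goals omega
      · -- v = [M]: then b = M, contradicting max a b < M
        have hb : b = M := by
          have h1 := congrArg List.getLast? huv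
          simpa using h1
        omega
    · -- M ≤ max a b : z ≤ M ≤ max a b < z, contradiction
      have hzmem : z ∈ stackSort α ++ stackSort β ++ [M] := hs.subset (by simp)
      rw [← stackSort_eq hne] at hzmem
      have hzl : z ∈ l := mem_stackSort_subset (n+1) l hlen z hzmem
      have := le_foldr_max hzl
      omega

def GoodT (l : List ℕ) (x y : ℕ) : Prop :=
  ∀ z, max x y < z → ¬ [x, z, y] <+ l ∧ ¬ [y, z, x] <+ l

lemma NLB_iff (l : List ℕ) (x y : ℕ) : NoLargerBetween l x y ↔ GoodT l x y := by
  constructor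
  · intro h z hz
    constructor
    · intro hs
      obtain ⟨i, j, k, hij, hjk, hk, hi, hj, hk'⟩ := sublist_triple hs
      have := h i j k hij hjk hk (Or.inl ⟨hi, hk'⟩)
      omega
    · intro hs
      obtain ⟨i, j, k, hij, hjk, hk, hi, hj, hk'⟩ := sublist_triple hs
      have := h i j k hij hjk hk (Or.inr ⟨hi, hk'⟩)
      omega
  · intro h i j k hij hjk hk hxy
    by_contra hgt
    push_neg at hgt
    have hsub := triple_sublist hij hjk hk
    rcases hxy with ⟨h1, h2⟩ | ⟨h1, h2⟩
    · exact (h _ hgt).1 (by rwa [h1, h2] at hsub)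
    · exact (h _ hgt).2 (by rwa [h1, h2] at hsub)

lemma good_reverse {l : List ℕ} {x y : ℕ} (h : GoodT l x y) :
    GoodT l.reverse x y := by
  intro z hz
  constructor
  · intro hs
    have h2 := hs.reverse
    simp only [List.reverse_reverse] at h2
    exact (h z hz).2 (by simpa using h2)
  · intro hs
    have h2 := hs.reverse
    simp only [List.reverse_reverse] at h2
    exact (h z hz).1 (by simpa using h2)

lemma good_stackSort {l : List ℕ} {x y : ℕ} (h : GoodT l x y) :
    GoodT (stackSort l) x y := by
  intro z hz
  refine ⟨key l.length x y l le_rfl (fun w hw => (h w hw).1) z hz, ?_⟩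
  have hc : max y x = max x y := max_comm y x
  exact key l.length y x l le_rfl
    (fun w hw => (h w (hc ▸ hw)).2) z (hc ▸ hz)

end SLB
/-- if no value larger than `max x y` occurs between `x` and `y`
in `τ`, the same holds in `A(τ)` for any composition `A` of `S` and `R`. -/
theorem noLargerBetween_applyOps :
    ∀ (ops : List SOp) (τ : List ℕ), τ.Nodup →
      ∀ x y : ℕ, x ∈ τ → y ∈ τ →
        NoLargerBetween τ x y → NoLargerBetween (applyOps ops τ) x y := by
  intro ops τ _ x y _ _ h
  rw [SLB.NLB_iff] at h ⊢
  induction ops with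
  | nil => exact h
  | cons op ops ihops =>
    have hstep : applyOps (op :: ops) τ = applyOp op (applyOps ops τ) := rfl
    rw [hstep]
    cases op
    · exact SLB.good_stackSort ihops
    · exact SLB.good_reverse ihops
end
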